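/- arXiv:2112.14999 — 4 statements merged into one kernel-verified Lean document; each statement's English description precedes it below -/
import Mathlib

section
/- Assume Hypotheses (H). Fix s ∈ I, T > s and f ∈ C_b(ℝ^d;ℝ^m), and let M := M_{[s,T]}. If u^P is a classical solution of the Cauchy problem D_t u = 𝒜^P(t)u on (s,T]×ℝ^d with u(s,·) = f which is bounded on [s,T]×ℝ^d, then max_{k=1,…,m} |u^P_k(t,x)| ≤ e^{M(t−s)} max_{k=1,…,m} sup_{ℝ^d}|f_k| for every (t,x) ∈ [s,T]×ℝ^d. -/
open Set Filter Metric MeasureTheory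
open scoped BigOperators Topology

noncomputable section

/-- Euclidean space `ℝ^d`. -/
abbrev Euc (d : ℕ) := EuclideanSpace ℝ (Fin d)

variable {d m : ℕ}

/-- First-order spatial partial derivative. -/
def pd (i : Fin d) (f : Euc d → ℝ) (x : Euc d) : ℝ :=
  fderiv ℝ f x (EuclideanSpace.single i 1)

/-- Second-order spatial partial derivative. -/
def pd2 (i j : Fin d) (f : Euc d → ℝ) (x : Euc d) : ℝ :=
  fderiv ℝ (fun y => pd j f y) x (EuclideanSpace.single i 1)

/-- The weakly coupled elliptic operator `𝒜(t)` with diffusion coefficients `Q`,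
drift coefficients `b` and potential matrix `c`, acting on `ζ : ℝ^d → ℝ^m`. -/
def opA (Q : Fin m → ℝ → Euc d → Fin d → Fin d → ℝ)
    (b : Fin m → ℝ → Euc d → Fin d → ℝ)
    (c : ℝ → Euc d → Fin m → Fin m → ℝ)
    (t : ℝ) (ζ : Euc d → Fin m → ℝ) (x : Euc d) (k : Fin m) : ℝ :=
  (∑ i, ∑ j, Q k t x i j * pd2 i j (fun y => ζ y k) x)
    + (∑ j, b k t x j * pd j (fun y => ζ y k) x)
    + (∑ h, c t x k h * ζ x h)

/-- The matrix `C^P`: diagonal entries of `C`, absolute values off the diagonal. -/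
def CP (c : ℝ → Euc d → Fin m → Fin m → ℝ) :
    ℝ → Euc d → Fin m → Fin m → ℝ :=
  fun t x k h => if k = h then c t x k h else |c t x k h|

/-- Smallest eigenvalue of a (symmetric) matrix, via the Rayleigh quotient. -/
def minEig (A : Fin d → Fin d → ℝ) : ℝ :=
  sInf {r : ℝ | ∃ ξ : Euc d, ‖ξ‖ = 1 ∧ r = ∑ i, ∑ j, A i j * ξ i * ξ j}

/-- Local parabolic `(α/2, α)`-Hölder continuity on `I × ℝ^d`. -/
def LocParHolder {F : Type*} [NormedAddCommGroup F] (α : ℝ) (I : Set ℝ)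
    (f : ℝ → Euc d → F) : Prop :=
  ∀ K : Set (ℝ × Euc d), K ⊆ I ×ˢ (univ : Set (Euc d)) → IsCompact K →
    ∃ L : ℝ, ∀ p ∈ K, ∀ q ∈ K,
      ‖f p.1 p.2 - f q.1 q.2‖ ≤ L * (|p.1 - q.1| ^ (α / 2) + ‖p.2 - q.2‖ ^ α)

/-- `I` is a right half-line (possibly all of `ℝ`). -/
def IsRightHalfline (I : Set ℝ) : Prop := (∃ a, I = Ici a) ∨ I = univ

/-- Hypotheses (H). -/
structure Hyp (I : Set ℝ)
    (Q : Fin m → ℝ → Euc d → Fin d → Fin d → ℝ)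
    (b : Fin m → ℝ → Euc d → Fin d → ℝ)
    (c : ℝ → Euc d → Fin m → Fin m → ℝ) : Prop where
  symm : ∀ k t x i j, Q k t x i j = Q k t x j i
  holder : ∃ α ∈ Ioo (0:ℝ) 1,
      (∀ k i j, LocParHolder α I (fun t x => Q k t x i j)) ∧
      (∀ k j, LocParHolder α I (fun t x => b k t x j)) ∧
      (∀ k h, LocParHolder α I (fun t x => c t x k h))
  ellipt : ∀ J : Set ℝ, J ⊆ I → Bornology.IsBounded J →
      ∀ k, ∃ μ0 > 0, ∀ t ∈ J, ∀ x : Euc d, μ0 ≤ minEig (Q k t x)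
  lyap : ∀ J : Set ℝ, J ⊆ I → Bornology.IsBounded J →
      ∃ φ : Euc d → Fin m → ℝ, ∃ lam > 0,
        (∀ k, ContDiff ℝ 2 (fun x => φ x k)) ∧
        (∀ x k, 0 < φ x k) ∧
        (∀ k, Tendsto (fun x => φ x k) (cocompact (Euc d)) atTop) ∧
        (∀ t ∈ J, ∀ x k, opA Q b (CP c) t φ x k ≤ lam * φ x k)
  irred : ¬ ∃ K : Set (Fin m), K.Nonempty ∧ K ≠ univ ∧
      ∀ i ∈ K, ∀ j ∉ K, ∀ t ∈ I, ∀ x : Euc d, c t x i j = 0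
  rowBdd : ∀ J : Set ℝ, J ⊆ I → Bornology.IsBounded J →
      ∃ M : ℝ, ∀ t ∈ J, ∀ x : Euc d, ∀ k, (∑ j, CP c t x k j) ≤ M

/-- `f` is bounded and continuous (membership in `C_b(ℝ^d; ℝ^m)`). -/
def IsBddContinuous (f : Euc d → Fin m → ℝ) : Prop :=
  Continuous f ∧ ∃ F, ∀ x k, |f x k| ≤ F

/-- Classical solution of the Cauchy problem for the operator with coefficients
`Q, b, c`, datum `f` at time `s`. -/
def ClassicalSol (Q : Fin m → ℝ → Euc d → Fin d → Fin d → ℝ)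
    (b : Fin m → ℝ → Euc d → Fin d → ℝ)
    (c : ℝ → Euc d → Fin m → Fin m → ℝ)
    (s : ℝ) (f : Euc d → Fin m → ℝ) (u : ℝ → Euc d → Fin m → ℝ) : Prop :=
  ContinuousOn (fun p : ℝ × Euc d => u p.1 p.2) (Ici s ×ˢ (univ : Set (Euc d))) ∧
  (∀ x, u s x = f x) ∧
  (∀ t ∈ Ioi s, ∀ k, ContDiff ℝ 2 (fun x => u t x k)) ∧
  (∀ t ∈ Ioi s, ∀ x k, HasDerivAt (fun r => u r x k) (opA Q b c t (u t) x k) t)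

/-- Bounded on every strip `[s,T] × ℝ^d`. -/
def BddOnStrips (s : ℝ) (u : ℝ → Euc d → Fin m → ℝ) : Prop :=
  ∀ T > s, ∃ K, ∀ t ∈ Icc s T, ∀ x k, |u t x k| ≤ K

/-- Classical solution of the Cauchy problem on `(s,T] × ℝ^d`. -/
def ClassicalSolOn (Q : Fin m → ℝ → Euc d → Fin d → Fin d → ℝ)
    (b : Fin m → ℝ → Euc d → Fin d → ℝ)
    (c : ℝ → Euc d → Fin m → Fin m → ℝ)
    (s T : ℝ) (f : Euc d → Fin m → ℝ) (u : ℝ → Euc d → Fin m → ℝ) : Prop :=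
  ContinuousOn (fun p : ℝ × Euc d => u p.1 p.2) (Icc s T ×ˢ (univ : Set (Euc d))) ∧
  (∀ x, u s x = f x) ∧
  (∀ t ∈ Ioc s T, ∀ k, ContDiff ℝ 2 (fun x => u t x k)) ∧
  (∀ t ∈ Ioc s T, ∀ x k, HasDerivAt (fun r => u r x k) (opA Q b c t (u t) x k) t)


section AuxLemmas

lemma psd_trace_nonneg {n : ℕ} {P : Matrix (Fin n) (Fin n) ℝ} (hP : P.PosSemidef) :
    0 ≤ P.trace := by
  apply Finset.sum_nonneg
  intro i _
  have := hP.2 (Finsupp.single i 1)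
  simpa [dotProduct, Matrix.mulVec, Pi.single_apply, Finset.mul_sum,
    Finset.sum_ite_eq, Finset.sum_ite_eq'] using this

lemma trace_prod_le {n : ℕ} (Q A : Fin n → Fin n → ℝ)
    (hQs : ∀ i j, Q i j = Q j i)
    (hQ : ∀ v : Fin n → ℝ, 0 ≤ ∑ i, ∑ j, Q i j * v i * v j)
    (hAs : ∀ i j, A i j = A j i)
    (hA : ∀ v : Fin n → ℝ, ∑ i, ∑ j, A i j * v i * v j ≤ 0) :
    ∑ i, ∑ j, Q i j * A i j ≤ 0 := by
  set Q' : Matrix (Fin n) (Fin n) ℝ := Matrix.of Q with hQ'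
  set A' : Matrix (Fin n) (Fin n) ℝ := Matrix.of (fun i j => -A i j) with hA'
  have hQpsd : Q'.PosSemidef := by
    refine Matrix.PosSemidef.of_dotProduct_mulVec_nonneg ?_ ?_
    · ext i j
      simp [Matrix.conjTranspose, Q', hQs i j]
    · intro x
      have := hQ x
      simp only [dotProduct, Matrix.mulVec, star_trivial]
      calc (0:ℝ) ≤ ∑ i, ∑ j, Q i j * x i * x j := hQ x
        _ = ∑ i, x i * ∑ j, Q i j * x j := by
            refine Finset.sum_congr rfl fun i _ => ?_
            rw [Finset.mul_sum]
            exact Finset.sum_congr rfl fun j _ => by ring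
        _ = ∑ i, x i * (Matrix.mulVec Q' x) i := rfl
  have hApsd : A'.PosSemidef := by
    refine Matrix.PosSemidef.of_dotProduct_mulVec_nonneg ?_ ?_
    · ext i j
      simp [Matrix.conjTranspose, A', hAs i j]
    · intro x
      simp only [dotProduct, Matrix.mulVec, star_trivial]
      calc (0:ℝ) ≤ -∑ i, ∑ j, A i j * x i * x j := by linarith [hA x]
        _ = ∑ i, x i * ∑ j, (-A i j) * x j := by
            rw [← Finset.sum_neg_distrib]
            refine Finset.sum_congr rfl fun i _ => ?_
            rw [Finset.mul_sum, ← Finset.sum_neg_distrib]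
            exact Finset.sum_congr rfl fun j _ => by ring
        _ = ∑ i, x i * (Matrix.mulVec A' x) i := rfl
  obtain ⟨B, hB⟩ : ∃ B : Matrix (Fin n) (Fin n) ℝ, Q' = B.conjTranspose * B := by
    open scoped MatrixOrder in
    exact CStarAlgebra.nonneg_iff_eq_star_mul_self.mp hQpsd.nonneg
  have key : 0 ≤ (Q' * A').trace := by
    rw [hB, ← Matrix.trace_mul_cycle B A' B.conjTranspose]
    exact psd_trace_nonneg (hApsd.mul_mul_conjTranspose_same B)
  have : (Q' * A').trace = -∑ i, ∑ j, Q i j * A i j := by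
    simp only [Matrix.trace, Matrix.diag, Matrix.mul_apply, Q', A', Matrix.of_apply]
    rw [← Finset.sum_neg_distrib]
    refine Finset.sum_congr rfl fun i _ => ?_
    rw [← Finset.sum_neg_distrib]
    exact Finset.sum_congr rfl fun j _ => by rw [hAs i j]; ring
  rw [this] at key; linarith


/-- At a global max at `0`, the second derivative is `≤ 0`. -/
lemma secondDeriv_nonpos_at_max {h h' : ℝ → ℝ} {a : ℝ}
    (hd : ∀ r, HasDerivAt h (h' r) r) (hd2 : HasDerivAt h' a 0)
    (hmax : ∀ r, h r ≤ h 0) : a ≤ 0 := by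
  by_contra hpos
  push_neg at hpos
  have h'0 : h' 0 = 0 := by
    have : IsLocalMax h 0 := Filter.Eventually.of_forall hmax
    exact this.hasDerivAt_eq_zero (hd 0)
  -- slope of h' at 0 tends to a
  have hslope : Tendsto (slope h' 0) (𝓝[≠] (0:ℝ)) (𝓝 a) :=
    hasDerivAt_iff_tendsto_slope.mp hd2
  have hslope' : Tendsto (slope h' 0) (𝓝[>] (0:ℝ)) (𝓝 a) :=
    hslope.mono_left (nhdsWithin_mono _ (fun x hx => ne_of_gt hx))
  have hev : ∀ᶠ r in 𝓝[>] (0:ℝ), a/2 < slope h' 0 r :=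
    hslope'.eventually (eventually_gt_nhds (half_lt_self hpos))
  obtain ⟨u, hu, hIoo⟩ := mem_nhdsGT_iff_exists_Ioo_subset.mp hev
  have hu0 : (0:ℝ) < u := hu
  have hpos' : ∀ r ∈ Ioo (0:ℝ) u, 0 < h' r := by
    intro r hr
    have h3 : a / 2 < h' r / r := by
      have hs : slope h' 0 r = h' r / r := by simp [slope, h'0, div_eq_inv_mul]
      rw [← hs]; exact hIoo hr
    have : (0:ℝ) < h' r / r := lt_trans (half_pos hpos) h3
    exact (div_pos_iff.mp this).resolve_right (fun ⟨_, hr2⟩ => absurd hr.1 (not_lt.mpr hr2.le)) |>.1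
  have hmono : StrictMonoOn h (Icc 0 u) := by
    apply strictMonoOn_of_deriv_pos (convex_Icc 0 u)
    · exact fun x _ => (hd x).continuousAt.continuousWithinAt
    · intro x hx
      rw [interior_Icc] at hx
      rw [(hd x).deriv]
      exact hpos' x hx
  have : h 0 < h u := hmono ⟨le_refl 0, hu0.le⟩ ⟨hu0.le, le_refl u⟩ hu0
  exact absurd (hmax u) (not_le.mpr this)

/-- Right-endpoint maximum: derivative nonneg. -/
lemma deriv_nonneg_at_right_max {h : ℝ → ℝ} {a s t0 : ℝ} (hst : s < t0)
    (hd : HasDerivAt h a t0) (hmax : ∀ t ∈ Ioo s t0, h t ≤ h t0) : 0 ≤ a := by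
  have hslope : Tendsto (slope h t0) (𝓝[≠] t0) (𝓝 a) :=
    hasDerivAt_iff_tendsto_slope.mp hd
  have hslope' : Tendsto (slope h t0) (𝓝[<] t0) (𝓝 a) :=
    hslope.mono_left (nhdsWithin_mono _ (fun x hx => ne_of_lt hx))
  refine ge_of_tendsto hslope' ?_
  have : Ioo s t0 ∈ 𝓝[<] t0 := Ioo_mem_nhdsLT_of_mem ⟨hst, le_refl t0⟩
  filter_upwards [this] with t ht
  have h1 : h t - h t0 ≤ 0 := sub_nonpos.mpr (hmax t ht)
  have h2 : t - t0 < 0 := sub_neg.mpr ht.2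
  have hs : slope h t0 t = (h t - h t0) / (t - t0) := by simp [slope, div_eq_inv_mul]
  rw [hs]
  exact div_nonneg_of_nonpos h1 h2.le


variable {d : ℕ}

lemma fderiv_fderiv_differentiable {g : Euc d → ℝ} (hg : ContDiff ℝ 2 g) :
    Differentiable ℝ (fderiv ℝ g) :=
  (hg.fderiv_right (m := 1) (by norm_num)).differentiable one_ne_zero

lemma pd2_eq_snd {g : Euc d → ℝ} (hg : ContDiff ℝ 2 g) (i j : Fin d) (x : Euc d) :
    pd2 i j g x
      = fderiv ℝ (fderiv ℝ g) x (EuclideanSpace.single i 1) (EuclideanSpace.single j 1) := by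
  unfold pd2 pd
  have hdf : DifferentiableAt ℝ (fderiv ℝ g) x := fderiv_fderiv_differentiable hg x
  rw [fderiv_clm_apply hdf (differentiableAt_const _)]
  simp

lemma hess_nonpos_at_max {g : Euc d → ℝ} (hg : ContDiff ℝ 2 g) {x0 : Euc d}
    (hmax : ∀ x, g x ≤ g x0) (w : Euc d) :
    fderiv ℝ (fderiv ℝ g) x0 w w ≤ 0 := by
  set L : ℝ → Euc d := fun r => x0 + r • w with hLdef
  have hL : ∀ r, HasDerivAt L w r := by
    intro r
    have h1 : HasDerivAt (fun r : ℝ => r • w) ((1:ℝ) • w) r := (hasDerivAt_id r).smul_const w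
    simpa [L] using h1.const_add x0
  have hgd : Differentiable ℝ g := hg.differentiable (by norm_num)
  have hdf : Differentiable ℝ (fderiv ℝ g) := fderiv_fderiv_differentiable hg
  have hh : ∀ r, HasDerivAt (fun r => g (L r)) (fderiv ℝ g (L r) w) r := by
    intro r
    exact (hgd (L r)).hasFDerivAt.comp_hasDerivAt r (hL r)
  have hL0 : L 0 = x0 := by simp [L]
  have hd2 : HasDerivAt (fun r => fderiv ℝ g (L r) w)
      (fderiv ℝ (fderiv ℝ g) x0 w w) 0 := by
    have h1 : HasDerivAt (fun r => fderiv ℝ g (L r)) (fderiv ℝ (fderiv ℝ g) x0 w) 0 := by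
      have := ((hdf (L 0)).hasFDerivAt).comp_hasDerivAt 0 (hL 0)
      rwa [hL0] at this
    have h2 := (ContinuousLinearMap.apply ℝ ℝ w).hasFDerivAt.comp_hasDerivAt 0 h1
    exact h2
  exact secondDeriv_nonpos_at_max hh hd2 (fun r => by
    have := hmax (L r); rwa [← hL0] at this)

lemma coord_sum (v : Fin d → ℝ) (j : Fin d) :
    (∑ i, v i • EuclideanSpace.single i (1:ℝ)) j = v j := by
  classical
  have : (∑ i, v i • EuclideanSpace.single i (1:ℝ)) j
      = EuclideanSpace.proj j (∑ i, v i • EuclideanSpace.single i (1:ℝ)) := rfl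
  rw [this, map_sum]
  simp [EuclideanSpace.single_apply]

lemma clm2_sum (B : Euc d →L[ℝ] Euc d →L[ℝ] ℝ) (v : Fin d → ℝ) :
    B (∑ i, v i • EuclideanSpace.single i (1:ℝ)) (∑ j, v j • EuclideanSpace.single j (1:ℝ))
      = ∑ i, ∑ j, B (EuclideanSpace.single i (1:ℝ)) (EuclideanSpace.single j (1:ℝ)) * v i * v j := by
  calc B (∑ i, v i • EuclideanSpace.single i (1:ℝ)) (∑ j, v j • EuclideanSpace.single j (1:ℝ))
      = ∑ i, B (v i • EuclideanSpace.single i (1:ℝ)) (∑ j, v j • EuclideanSpace.single j (1:ℝ)) := by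
        rw [map_sum B _ Finset.univ, ContinuousLinearMap.sum_apply]
    _ = ∑ i, ∑ j, B (v i • EuclideanSpace.single i (1:ℝ)) (v j • EuclideanSpace.single j (1:ℝ)) :=
        Finset.sum_congr rfl fun i _ => map_sum _ _ _
    _ = _ := by
        refine Finset.sum_congr rfl fun i _ => Finset.sum_congr rfl fun j _ => ?_
        rw [_root_.map_smul, _root_.map_smul, ContinuousLinearMap.smul_apply]
        simp only [smul_eq_mul]; ring
lemma pd_comb {A B : ℝ} {U Φ : Euc d → ℝ} {y : Euc d}
    (hU : DifferentiableAt ℝ U y) (hΦ : DifferentiableAt ℝ Φ y) (j : Fin d) :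
    pd j (fun x => A * U x - B * Φ x) y = A * pd j U y - B * pd j Φ y := by
  unfold pd
  rw [fderiv_fun_sub (hU.const_mul A) (hΦ.const_mul B), fderiv_const_mul hU A,
    fderiv_const_mul hΦ B]
  simp

lemma pd_differentiable {U : Euc d → ℝ} (hU : ContDiff ℝ 2 U) (j : Fin d) :
    Differentiable ℝ (fun y => pd j U y) := by
  have h1 : Differentiable ℝ (fderiv ℝ U) := fderiv_fderiv_differentiable hU
  exact fun y => ((ContinuousLinearMap.apply ℝ ℝ
    (EuclideanSpace.single j (1:ℝ))).differentiable.comp h1) y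

lemma pd2_comb {A B : ℝ} {U Φ : Euc d → ℝ} (hU : ContDiff ℝ 2 U) (hΦ : ContDiff ℝ 2 Φ)
    (i j : Fin d) (x : Euc d) :
    pd2 i j (fun x => A * U x - B * Φ x) x = A * pd2 i j U x - B * pd2 i j Φ x := by
  unfold pd2
  have hfun : (fun y => pd j (fun x => A * U x - B * Φ x) y)
      = fun y => A * pd j U y - B * pd j Φ y :=
    funext fun y => pd_comb (hU.differentiable (by norm_num) y)
      (hΦ.differentiable (by norm_num) y) j
  rw [hfun]
  have hdU : DifferentiableAt ℝ (fun y => pd j U y) x := pd_differentiable hU j x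
  have hdΦ : DifferentiableAt ℝ (fun y => pd j Φ y) x := pd_differentiable hΦ j x
  rw [fderiv_fun_sub (hdU.const_mul A) (hdΦ.const_mul B), fderiv_const_mul hdU A,
    fderiv_const_mul hdΦ B]
  simp

/-- From `μ0 ≤ minEig Q` with `μ0 > 0`, the quadratic form of `Q` is nonnegative. -/
lemma quad_nonneg_of_minEig {Q : Fin d → Fin d → ℝ} {μ0 : ℝ} (hμ : 0 < μ0)
    (hmin : μ0 ≤ minEig Q) (v : Fin d → ℝ) :
    0 ≤ ∑ i, ∑ j, Q i j * v i * v j := by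
  classical
  rcases eq_or_ne v 0 with rfl | hv
  · simp
  set w : Euc d := (WithLp.equiv 2 (Fin d → ℝ)).symm v with hw
  have hwv : ∀ i, w i = v i := fun i => rfl
  have hwne : w ≠ 0 := by
    intro h
    apply hv
    funext i
    rw [← hwv i, h]
    simp
  have hnorm : (0:ℝ) < ‖w‖ := norm_pos_iff.mpr hwne
  set ξ : Euc d := (‖w‖:ℝ)⁻¹ • w with hξ
  have hξnorm : ‖ξ‖ = 1 := norm_smul_inv_norm (𝕜 := ℝ) hwne
  have hξi : ∀ i, ξ i = ‖w‖⁻¹ * v i := fun i => by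
    rw [hξ]
    show (‖w‖⁻¹ • w) i = _
    rw [PiLp.smul_apply, hwv i, smul_eq_mul]
  -- the Rayleigh value for ξ belongs to the defining set of minEig
  set S : Set ℝ := {r : ℝ | ∃ ζ : Euc d, ‖ζ‖ = 1 ∧ r = ∑ i, ∑ j, Q i j * ζ i * ζ j} with hS
  have hmem : (∑ i, ∑ j, Q i j * ξ i * ξ j) ∈ S := ⟨ξ, hξnorm, rfl⟩
  have hbdd : BddBelow S := by
    refine ⟨-∑ i, ∑ j, |Q i j|, fun r hr => ?_⟩
    obtain ⟨ζ, hζ, rfl⟩ := hr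
    have hζi : ∀ i, |ζ i| ≤ 1 := by
      intro i
      rw [abs_le_one_iff_mul_self_le_one]
      have h1 : ζ i * ζ i ≤ ∑ j, ζ j * ζ j := by
        refine Finset.single_le_sum (f := fun j => ζ j * ζ j)
          (fun j _ => mul_self_nonneg _) (Finset.mem_univ i)
      have h2 : ∑ j, ζ j * ζ j = 1 := by
        have := EuclideanSpace.norm_eq ζ
        rw [hζ] at this
        have h3 : Real.sqrt (∑ j, ‖ζ j‖ ^ 2) = 1 := this.symm
        have h4 : (∑ j, ‖ζ j‖ ^ 2) = 1 := by
          have h5 : (0:ℝ) ≤ ∑ j, ‖ζ j‖ ^ 2 :=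
            Finset.sum_nonneg fun j _ => sq_nonneg _
          nlinarith [Real.sq_sqrt h5]
        calc ∑ j, ζ j * ζ j = ∑ j, ‖ζ j‖ ^ 2 := by
              refine Finset.sum_congr rfl fun j _ => ?_
              rw [Real.norm_eq_abs, sq_abs]; ring
          _ = 1 := h4
      linarith
    have habs : |∑ i, ∑ j, Q i j * ζ i * ζ j| ≤ ∑ i, ∑ j, |Q i j| := by
      refine (Finset.abs_sum_le_sum_abs _ _).trans ?_
      refine Finset.sum_le_sum fun i _ => ?_
      refine (Finset.abs_sum_le_sum_abs _ _).trans ?_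
      refine Finset.sum_le_sum fun j _ => ?_
      rw [abs_mul, abs_mul]
      calc |Q i j| * |ζ i| * |ζ j| ≤ |Q i j| * 1 * 1 := by
            apply mul_le_mul (mul_le_mul le_rfl (hζi i) (abs_nonneg _) (abs_nonneg _))
              (hζi j) (abs_nonneg _)
            positivity
        _ = |Q i j| := by ring
    linarith [neg_abs_le (∑ i, ∑ j, Q i j * ζ i * ζ j)]
  have hr : μ0 ≤ ∑ i, ∑ j, Q i j * ξ i * ξ j :=
    le_trans hmin (csInf_le hbdd hmem)
  have hexp : ∑ i, ∑ j, Q i j * ξ i * ξ j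
      = ‖w‖⁻¹ ^ 2 * ∑ i, ∑ j, Q i j * v i * v j := by
    rw [Finset.mul_sum]
    refine Finset.sum_congr rfl fun i _ => ?_
    rw [Finset.mul_sum]
    refine Finset.sum_congr rfl fun j _ => ?_
    rw [hξi i, hξi j]; ring
  have h0 : 0 < ‖w‖⁻¹ ^ 2 := by positivity
  nlinarith [hr, hexp]
lemma psi_max_facts {U Φ : Euc d → ℝ} (hU : ContDiff ℝ 2 U) (hΦ : ContDiff ℝ 2 Φ)
    {A B : ℝ} {x0 : Euc d}
    (hmax : ∀ x, A * U x - B * Φ x ≤ A * U x0 - B * Φ x0) :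
    (∀ j, A * pd j U x0 - B * pd j Φ x0 = 0) ∧
    (∀ Qm : Fin d → Fin d → ℝ, (∀ i j, Qm i j = Qm j i) →
      (∀ v : Fin d → ℝ, 0 ≤ ∑ i, ∑ j, Qm i j * v i * v j) →
      ∑ i, ∑ j, Qm i j * (A * pd2 i j U x0 - B * pd2 i j Φ x0) ≤ 0) := by
  set ψ : Euc d → ℝ := fun x => A * U x - B * Φ x with hψdef
  have hψ : ContDiff ℝ 2 ψ := (contDiff_const.mul hU).sub (contDiff_const.mul hΦ)
  have hloc : IsLocalMax ψ x0 := Filter.Eventually.of_forall hmax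
  have hgrad : fderiv ℝ ψ x0 = 0 := hloc.fderiv_eq_zero
  constructor
  · intro j
    have h1 : pd j ψ x0 = 0 := by unfold pd; rw [hgrad]; rfl
    rw [← pd_comb (hU.differentiable (by norm_num) x0)
      (hΦ.differentiable (by norm_num) x0) j]
    exact h1
  · intro Qm hQs hQpos
    have hcomb : ∀ i j, A * pd2 i j U x0 - B * pd2 i j Φ x0 = pd2 i j ψ x0 :=
      fun i j => (pd2_comb hU hΦ i j x0).symm
    have hrw : ∑ i, ∑ j, Qm i j * (A * pd2 i j U x0 - B * pd2 i j Φ x0)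
        = ∑ i, ∑ j, Qm i j * pd2 i j ψ x0 := by
      refine Finset.sum_congr rfl fun i _ => Finset.sum_congr rfl fun j _ => ?_
      rw [hcomb i j]
    rw [hrw]
    set f'' := fderiv ℝ (fderiv ℝ ψ) x0 with hf''
    have heq : ∀ i j, pd2 i j ψ x0
        = f'' (EuclideanSpace.single i (1:ℝ)) (EuclideanSpace.single j (1:ℝ)) :=
      fun i j => pd2_eq_snd hψ i j x0
    have hsymm2 : ∀ v w : Euc d, f'' v w = f'' w v := by
      intro v w
      exact second_derivative_symmetric
        (fun y => ((hψ.differentiable (by norm_num)) y).hasFDerivAt)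
        ((fderiv_fderiv_differentiable hψ x0).hasFDerivAt) v w
    have hAs : ∀ i j, pd2 i j ψ x0 = pd2 j i ψ x0 := by
      intro i j; rw [heq, heq, hsymm2]
    have hAneg : ∀ v : Fin d → ℝ, ∑ i, ∑ j, pd2 i j ψ x0 * v i * v j ≤ 0 := by
      intro v
      have hw := hess_nonpos_at_max hψ hmax (∑ i, v i • EuclideanSpace.single i (1:ℝ))
      rw [clm2_sum] at hw
      calc ∑ i, ∑ j, pd2 i j ψ x0 * v i * v j
          = ∑ i, ∑ j, f'' (EuclideanSpace.single i (1:ℝ))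
              (EuclideanSpace.single j (1:ℝ)) * v i * v j := by
            refine Finset.sum_congr rfl fun i _ => Finset.sum_congr rfl fun j _ => ?_
            rw [heq i j]
        _ ≤ 0 := hw
    exact trace_prod_le Qm (fun i j => pd2 i j ψ x0) hQs hQpos hAs hAneg

end AuxLemmas

set_option maxHeartbeats 2000000 in
/-- Proposition 2.6(i): a priori bound for bounded classical solutions of the
Cauchy problem for `𝒜^P`.  Here `M` is any upper bound for the row sums of `C^P` on
`[s,T] × ℝ^d` and `F` any upper bound for `max_k sup |f_k|`. -/
theorem statement_1 {d m : ℕ} (hd : 1 ≤ d) (hm : 2 ≤ m)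
    (I : Set ℝ) (hI : IsRightHalfline I)
    (Q : Fin m → ℝ → Euc d → Fin d → Fin d → ℝ)
    (b : Fin m → ℝ → Euc d → Fin d → ℝ)
    (c : ℝ → Euc d → Fin m → Fin m → ℝ)
    (hH : Hyp I Q b c)
    (s T : ℝ) (hs : s ∈ I) (hT : T ∈ I) (hsT : s < T)
    (f : Euc d → Fin m → ℝ) (hf : IsBddContinuous f)
    (uP : ℝ → Euc d → Fin m → ℝ)
    (huP : ClassicalSolOn Q b (CP c) s T f uP)
    (hbd : ∃ K, ∀ t ∈ Icc s T, ∀ x : Euc d, ∀ k, |uP t x k| ≤ K)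
    (M : ℝ) (hM : ∀ t ∈ Icc s T, ∀ x : Euc d, ∀ k, (∑ j, CP c t x k j) ≤ M)
    (F : ℝ) (hF : ∀ (x : Euc d) k, |f x k| ≤ F) :
    ∀ t ∈ Icc s T, ∀ x : Euc d, ∀ k, |uP t x k| ≤ Real.exp (M * (t - s)) * F := by
  classical
  obtain ⟨K, hK⟩ := hbd
  have hJI : Icc s T ⊆ I := by
    rcases hI with ⟨a, rfl⟩ | rfl
    · exact fun t ht => le_trans hs ht.1
    · exact fun t _ => mem_univ t
  obtain ⟨φ, lam, hlam, hφC2, hφpos, hφtend, hlyap⟩ :=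
    hH.lyap (Icc s T) hJI (Metric.isBounded_Icc (a := s) (b := T))
  set lam' : ℝ := lam + |M| + 1 with hlam'def
  have hlam'pos : 0 < lam' := by
    have := abs_nonneg M; unfold lam'; linarith
  have hF0 : 0 ≤ F := le_trans (abs_nonneg _) (hF 0 ⟨0, by omega⟩)
  obtain ⟨hcont, hinit, hC2, hderiv⟩ := huP
  choose μ0 hμ0 hminE using hH.ellipt (Icc s T) hJI (Metric.isBounded_Icc (a := s) (b := T))
  have hK0 : 0 ≤ K := le_trans (abs_nonneg _) (hK s ⟨le_rfl, hsT.le⟩ 0 ⟨0, by omega⟩)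
  -- the key claim
  have key : ∀ ε : ℝ, 0 < ε → ∀ bb : Bool, ∀ t ∈ Icc s T, ∀ x : Euc d, ∀ k : Fin m,
      (if bb then (1:ℝ) else -1) * uP t x k * Real.exp (-(M * (t - s)))
        - ε * Real.exp (lam' * (t - s)) * φ x k ≤ F := by
    intro ε hε
    by_contra hcon
    push_neg at hcon
    obtain ⟨bb1, t1, ht1, x1, k1, hgt⟩ := hcon
    set sg : Bool → ℝ := fun bb => if bb then (1:ℝ) else -1 with hsgdef
    have hsgabs : ∀ bb, |sg bb| = 1 := by intro bb; cases bb <;> simp [sg]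
    set g : Bool → Fin m → ℝ → Euc d → ℝ := fun bb k t x =>
      sg bb * uP t x k * Real.exp (-(M * (t - s)))
        - ε * Real.exp (lam' * (t - s)) * φ x k with hgdef
    have hgt1 : F < g bb1 k1 t1 x1 := hgt
    set K' : ℝ := K * Real.exp (|M| * (T - s)) with hK'def
    -- bound for the first term of g on the strip
    have hbd1 : ∀ t ∈ Icc s T, ∀ x k bb, sg bb * uP t x k * Real.exp (-(M * (t - s))) ≤ K' := by
      intro t ht x k bb
      have h1 : |sg bb * uP t x k * Real.exp (-(M * (t - s)))|
          = |uP t x k| * Real.exp (-(M * (t - s))) := by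
        rw [abs_mul, abs_mul, hsgabs, one_mul, abs_of_pos (Real.exp_pos _)]
      have h2 : Real.exp (-(M * (t - s))) ≤ Real.exp (|M| * (T - s)) := by
        apply Real.exp_le_exp.mpr
        have h3 : -(M * (t - s)) ≤ |M * (t - s)| := neg_le_abs _
        have h4 : |M * (t - s)| = |M| * |t - s| := abs_mul _ _
        have h5 : |t - s| ≤ T - s := by
          rw [abs_of_nonneg (by linarith [ht.1])]; linarith [ht.2]
        nlinarith [abs_nonneg M, abs_nonneg (t - s)]
      calc sg bb * uP t x k * Real.exp (-(M * (t - s)))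
          ≤ |sg bb * uP t x k * Real.exp (-(M * (t - s)))| := le_abs_self _
        _ = |uP t x k| * Real.exp (-(M * (t - s))) := h1
        _ ≤ K * Real.exp (|M| * (T - s)) := by
            apply mul_le_mul (hK t ht x k) h2 (Real.exp_pos _).le hK0
        _ = K' := rfl
    set c0 : ℝ := g bb1 k1 t1 x1 with hc0def
    set R0 : ℝ := (K' - c0 + 1) / ε with hR0def
    -- compact sets where φ is small
    have hCk : ∀ k : Fin m, ∃ C : Set (Euc d), IsCompact C ∧ ∀ x ∉ C, R0 ≤ φ x k := by
      intro k
      have := (hφtend k).eventually (eventually_ge_atTop R0)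
      obtain ⟨C, hC, hsub⟩ := mem_cocompact.mp this
      exact ⟨C, hC, fun x hx => hsub hx⟩
    choose Ck hCkcomp hCkout using hCk
    set KK : Set (Euc d) := (⋃ k, Ck k) ∪ {x1} with hKKdef
    have hKKcomp : IsCompact KK := (isCompact_iUnion hCkcomp).union isCompact_singleton
    have hx1KK : x1 ∈ KK := by right; rfl
    -- a value of g at a point outside KK is < c0
    have hout : ∀ t ∈ Icc s T, ∀ x ∉ KK, ∀ k bb, g bb k t x ≤ c0 - 1 := by
      intro t ht x hx k bb
      have hxk : R0 ≤ φ x k := hCkout k x (fun hmem => hx (Or.inl (mem_iUnion.mpr ⟨k, hmem⟩)))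
      have hexp1 : (1:ℝ) ≤ Real.exp (lam' * (t - s)) := by
        rw [show (1:ℝ) = Real.exp 0 by rw [Real.exp_zero]]
        apply Real.exp_le_exp.mpr
        have := ht.1
        nlinarith [hlam'pos]
      have hφx : 0 < φ x k := hφpos x k
      have h1 : ε * R0 ≤ ε * Real.exp (lam' * (t - s)) * φ x k := by
        calc ε * R0 ≤ ε * φ x k := mul_le_mul_of_nonneg_left hxk hε.le
          _ ≤ ε * Real.exp (lam' * (t - s)) * φ x k := by
            nlinarith [mul_le_mul_of_nonneg_left hexp1 (mul_nonneg hε.le hφx.le)]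
      have h2 : ε * R0 = K' - c0 + 1 := by
        rw [hR0def]; field_simp
      have h3 := hbd1 t ht x k bb
      simp only [hgdef]
      linarith
    -- maximize g over the compact set S
    set S : Set (ℝ × Euc d) := Icc s T ×ˢ KK with hSdef
    have hScomp : IsCompact S := isCompact_Icc.prod hKKcomp
    have hSne : S.Nonempty := ⟨(t1, x1), ht1, hx1KK⟩
    have hgc : ∀ (k : Fin m) (bb : Bool),
        ContinuousOn (fun p : ℝ × Euc d => g bb k p.1 p.2) S := by
      intro k bb
      have hsub : S ⊆ Icc s T ×ˢ (univ : Set (Euc d)) := fun p hp => ⟨hp.1, mem_univ _⟩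
      have h1 : ContinuousOn (fun p : ℝ × Euc d => uP p.1 p.2 k)
          (Icc s T ×ˢ (univ : Set (Euc d))) :=
        ((continuous_apply k).comp_continuousOn hcont)
      have h2 : Continuous (fun p : ℝ × Euc d => Real.exp (-(M * (p.1 - s)))) :=
        Real.continuous_exp.comp ((continuous_const.mul (continuous_fst.sub continuous_const)).neg)
      have h3 : Continuous (fun p : ℝ × Euc d => Real.exp (lam' * (p.1 - s))) :=
        Real.continuous_exp.comp (continuous_const.mul (continuous_fst.sub continuous_const))
      have h4 : Continuous (fun p : ℝ × Euc d => φ p.2 k) :=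
        ((hφC2 k).continuous).comp continuous_snd
      apply ContinuousOn.sub
      · exact (((continuousOn_const.mul h1).mul h2.continuousOn).mono hsub)
      · exact ((continuous_const.mul h3).mul h4).continuousOn
    have hpm : ∀ q : Fin m × Bool, ∃ p, p ∈ S ∧
        IsMaxOn (fun p : ℝ × Euc d => g q.2 q.1 p.1 p.2) S p := by
      intro q
      obtain ⟨p, hp, hmax⟩ := hScomp.exists_isMaxOn hSne (hgc q.1 q.2)
      exact ⟨p, hp, hmax⟩
    choose pt hptS hptmax using hpm
    haveI : Nonempty (Fin m) := ⟨⟨0, by omega⟩⟩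
    obtain ⟨q0, hq0⟩ := Finite.exists_max (fun q : Fin m × Bool =>
      g q.2 q.1 (pt q).1 (pt q).2)
    set k0 : Fin m := q0.1 with hk0def
    set bb0 : Bool := q0.2 with hbb0def
    set t0 : ℝ := (pt q0).1 with ht0def
    set x0 : Euc d := (pt q0).2 with hx0def
    set V : ℝ := g bb0 k0 t0 x0 with hVdef
    have hVeq : V = g q0.2 q0.1 (pt q0).1 (pt q0).2 := rfl
    -- global domination
    have hdom : ∀ t ∈ Icc s T, ∀ x k bb, g bb k t x ≤ V := by
      intro t ht x k bb
      by_cases hx : x ∈ KK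
      · have h1 : g bb k t x ≤ g bb k (pt (k, bb)).1 (pt (k, bb)).2 :=
          hptmax (k, bb) (Set.mk_mem_prod ht hx)
        exact le_trans h1 (by rw [hVeq]; exact hq0 (k, bb))
      · have h1 := hout t ht x hx k bb
        have h2 : c0 ≤ V := by
          have h3 : g bb1 k1 t1 x1 ≤ g bb1 k1 (pt (k1, bb1)).1 (pt (k1, bb1)).2 :=
            hptmax (k1, bb1) (Set.mk_mem_prod ht1 hx1KK)
          rw [hc0def, hVeq]
          exact le_trans h3 (hq0 (k1, bb1))
        linarith
    have ht0mem : t0 ∈ Icc s T := (hptS q0).1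
    have hc0V : c0 ≤ V := by
      have h3 : g bb1 k1 t1 x1 ≤ g bb1 k1 (pt (k1, bb1)).1 (pt (k1, bb1)).2 :=
        hptmax (k1, bb1) (Set.mk_mem_prod ht1 hx1KK)
      rw [hc0def, hVeq]
      exact le_trans h3 (hq0 (k1, bb1))
    have hFV : F < V := lt_of_lt_of_le hgt1 hc0V
    have hV0 : 0 ≤ V := le_trans hF0 hFV.le
    -- t0 > s
    have ht0s : s < t0 := by
      rcases lt_or_eq_of_le ht0mem.1 with h | h
      · exact h
      · exfalso
        have h1 : V = sg bb0 * f x0 k0 - ε * φ x0 k0 := by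
          rw [hVdef]
          simp only [hgdef]
          simp only [← h, sub_self, mul_zero, neg_zero, Real.exp_zero, hinit x0]
          ring
        have h2 : sg bb0 * f x0 k0 ≤ F := by
          calc sg bb0 * f x0 k0 ≤ |sg bb0 * f x0 k0| := le_abs_self _
            _ = |f x0 k0| := by rw [abs_mul, hsgabs, one_mul]
            _ ≤ F := hF x0 k0
        have h3 : 0 < φ x0 k0 := hφpos x0 k0
        have : V < F := by rw [h1]; nlinarith
        linarith
    have ht0Ioc : t0 ∈ Ioc s T := ⟨ht0s, ht0mem.2⟩
    -- abbreviations at the max point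
    set τ : ℝ := t0 - s with hτdef
    set E0 : ℝ := Real.exp (-(M * τ)) with hE0def
    set E1 : ℝ := Real.exp (lam' * τ) with hE1def
    set A : ℝ := sg bb0 * E0 with hAdef
    set B : ℝ := ε * E1 with hBdef
    have hE0pos : 0 < E0 := Real.exp_pos _
    have hBpos : 0 < B := by positivity
    -- identification of g at time t0
    have hgid : ∀ x k, g bb0 k t0 x = A * uP t0 x k - B * φ x k := by
      intro x k
      simp only [hgdef, hAdef, hBdef, hE0def, hE1def, hτdef]
      ring
    -- space max facts
    have hmax' : ∀ x, A * (fun x => uP t0 x k0) x - B * (fun x => φ x k0) x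
        ≤ A * (fun x => uP t0 x k0) x0 - B * (fun x => φ x k0) x0 := by
      intro x
      simp only
      rw [← hgid x k0, ← hgid x0 k0]
      exact hdom t0 ht0mem x k0 bb0
    obtain ⟨hgrad, hhess⟩ := psi_max_facts (hC2 t0 ht0Ioc k0) (hφC2 k0) hmax'
    -- ellipticity at the max point
    have hQpos : ∀ v : Fin d → ℝ, 0 ≤ ∑ i, ∑ j, Q k0 t0 x0 i j * v i * v j :=
      quad_nonneg_of_minEig (hμ0 k0) (hminE k0 t0 ht0mem x0)
    have hQsym : ∀ i j, Q k0 t0 x0 i j = Q k0 t0 x0 j i := fun i j => hH.symm k0 t0 x0 i j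
    -- second order inequality
    have htrace := hhess (Q k0 t0 x0) hQsym hQpos
    have hsplit : ∑ i, ∑ j, Q k0 t0 x0 i j *
          (A * pd2 i j (fun x => uP t0 x k0) x0 - B * pd2 i j (fun x => φ x k0) x0)
        = A * (∑ i, ∑ j, Q k0 t0 x0 i j * pd2 i j (fun x => uP t0 x k0) x0)
          - B * (∑ i, ∑ j, Q k0 t0 x0 i j * pd2 i j (fun x => φ x k0) x0) := by
      rw [Finset.mul_sum, Finset.mul_sum, ← Finset.sum_sub_distrib]
      refine Finset.sum_congr rfl fun i _ => ?_
      rw [Finset.mul_sum, Finset.mul_sum, ← Finset.sum_sub_distrib]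
      exact Finset.sum_congr rfl fun j _ => by ring
    have hQle : A * (∑ i, ∑ j, Q k0 t0 x0 i j * pd2 i j (fun x => uP t0 x k0) x0)
        ≤ B * (∑ i, ∑ j, Q k0 t0 x0 i j * pd2 i j (fun x => φ x k0) x0) := by
      rw [hsplit] at htrace; linarith
    -- first order equality
    have hble : A * (∑ j, b k0 t0 x0 j * pd j (fun x => uP t0 x k0) x0)
        = B * (∑ j, b k0 t0 x0 j * pd j (fun x => φ x k0) x0) := by
      rw [Finset.mul_sum, Finset.mul_sum]
      refine Finset.sum_congr rfl fun j _ => ?_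
      have h5 : A * pd j (fun x => uP t0 x k0) x0 = B * pd j (fun x => φ x k0) x0 := by
        linarith [hgrad j]
      calc A * (b k0 t0 x0 j * pd j (fun x => uP t0 x k0) x0)
          = b k0 t0 x0 j * (A * pd j (fun x => uP t0 x k0) x0) := by ring
        _ = b k0 t0 x0 j * (B * pd j (fun x => φ x k0) x0) := by rw [h5]
        _ = B * (b k0 t0 x0 j * pd j (fun x => φ x k0) x0) := by ring
    -- coupling estimates
    have hcoup : ∀ h : Fin m, A * uP t0 x0 h ≤ V + B * φ x0 h := by
      intro h
      have h1 : g bb0 h t0 x0 ≤ V := hdom t0 ht0mem x0 h bb0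
      rw [hgid x0 h] at h1
      linarith
    have hcoupeq : A * uP t0 x0 k0 = V + B * φ x0 k0 := by
      have h1 : V = A * uP t0 x0 k0 - B * φ x0 k0 := by rw [hVdef, hgid x0 k0]
      linarith
    have hcple : A * (∑ h, CP c t0 x0 k0 h * uP t0 x0 h)
        ≤ M * V + B * (∑ h, CP c t0 x0 k0 h * φ x0 h) := by
      have h1 : ∑ h, CP c t0 x0 k0 h * (A * uP t0 x0 h)
          ≤ ∑ h, CP c t0 x0 k0 h * (V + B * φ x0 h) := by
        refine Finset.sum_le_sum fun h _ => ?_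
        by_cases hh : k0 = h
        · subst hh
          rw [hcoupeq]
        · have hnn : 0 ≤ CP c t0 x0 k0 h := by
            simp only [CP, if_neg hh]
            exact abs_nonneg _
          exact mul_le_mul_of_nonneg_left (hcoup h) hnn
      have h2 : ∑ h, CP c t0 x0 k0 h * (V + B * φ x0 h)
          = (∑ h, CP c t0 x0 k0 h) * V + B * (∑ h, CP c t0 x0 k0 h * φ x0 h) := by
        rw [Finset.sum_mul, Finset.mul_sum, ← Finset.sum_add_distrib]
        exact Finset.sum_congr rfl fun h _ => by ring
      have h3 : (∑ h, CP c t0 x0 k0 h) * V ≤ M * V :=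
        mul_le_mul_of_nonneg_right (hM t0 ht0mem x0 k0) hV0
      have h4 : A * (∑ h, CP c t0 x0 k0 h * uP t0 x0 h)
          = ∑ h, CP c t0 x0 k0 h * (A * uP t0 x0 h) := by
        rw [Finset.mul_sum]
        exact Finset.sum_congr rfl fun h _ => by ring
      linarith [h1, h2 ▸ h1]
    -- time derivative at t0
    set D : ℝ := opA Q b (CP c) t0 (uP t0) x0 k0 with hDdef
    have hu' : HasDerivAt (fun t => uP t x0 k0) D t0 := hderiv t0 ht0Ioc x0 k0
    have he1 : HasDerivAt (fun t => Real.exp (-(M * (t - s)))) (-M * E0) t0 := by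
      have hin : HasDerivAt (fun t : ℝ => -(M * (t - s))) (-M) t0 := by
        have h1 : HasDerivAt (fun t : ℝ => t - s) 1 t0 := (hasDerivAt_id t0).sub_const s
        have h2 := (h1.const_mul M).neg
        simp only [mul_one] at h2
        exact h2
      have := hin.exp
      simpa [hE0def, hτdef, mul_comm] using this
    have he2 : HasDerivAt (fun t => Real.exp (lam' * (t - s))) (lam' * E1) t0 := by
      have hin : HasDerivAt (fun t : ℝ => lam' * (t - s)) lam' t0 := by
        have h1 : HasDerivAt (fun t : ℝ => t - s) 1 t0 := (hasDerivAt_id t0).sub_const s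
        simpa using h1.const_mul lam'
      have := hin.exp
      simpa [hE1def, hτdef, mul_comm] using this
    have htd : HasDerivAt (fun t => g bb0 k0 t x0)
        ((sg bb0 * D) * E0 + (sg bb0 * uP t0 x0 k0) * (-M * E0)
          - (ε * (lam' * E1)) * φ x0 k0) t0 := by
      have hfun : (fun t => g bb0 k0 t x0)
          = fun t => (sg bb0 * uP t x0 k0) * Real.exp (-(M * (t - s)))
              - (ε * Real.exp (lam' * (t - s))) * φ x0 k0 := by
        funext t
        simp only [hgdef]
      rw [hfun]
      exact ((hu'.const_mul (sg bb0)).mul he1).sub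
        ((he2.const_mul ε).mul_const (φ x0 k0))
    have hdpos : 0 ≤ (sg bb0 * D) * E0 + (sg bb0 * uP t0 x0 k0) * (-M * E0)
        - (ε * (lam' * E1)) * φ x0 k0 := by
      apply deriv_nonneg_at_right_max ht0s htd
      intro t ht
      exact hdom t ⟨ht.1.le, le_trans ht.2.le ht0mem.2⟩ x0 k0 bb0
    -- final contradiction
    have hDexp : D = (∑ i, ∑ j, Q k0 t0 x0 i j * pd2 i j (fun y => uP t0 y k0) x0)
        + (∑ j, b k0 t0 x0 j * pd j (fun y => uP t0 y k0) x0)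
        + (∑ h, CP c t0 x0 k0 h * uP t0 x0 h) := rfl
    have hlyap0 : (∑ i, ∑ j, Q k0 t0 x0 i j * pd2 i j (fun y => φ y k0) x0)
        + (∑ j, b k0 t0 x0 j * pd j (fun y => φ y k0) x0)
        + (∑ h, CP c t0 x0 k0 h * φ x0 h) ≤ lam * φ x0 k0 :=
      hlyap t0 ht0mem x0 k0
    have hAD : A * D ≤ B * (lam * φ x0 k0) + M * V := by
      rw [hDexp]
      have hexpand : A * ((∑ i, ∑ j, Q k0 t0 x0 i j * pd2 i j (fun y => uP t0 y k0) x0)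
          + (∑ j, b k0 t0 x0 j * pd j (fun y => uP t0 y k0) x0)
          + (∑ h, CP c t0 x0 k0 h * uP t0 x0 h))
          = A * (∑ i, ∑ j, Q k0 t0 x0 i j * pd2 i j (fun y => uP t0 y k0) x0)
          + A * (∑ j, b k0 t0 x0 j * pd j (fun y => uP t0 y k0) x0)
          + A * (∑ h, CP c t0 x0 k0 h * uP t0 x0 h) := by ring
      rw [hexpand]
      have hlyap1 : B * ((∑ i, ∑ j, Q k0 t0 x0 i j * pd2 i j (fun y => φ y k0) x0)
          + (∑ j, b k0 t0 x0 j * pd j (fun y => φ y k0) x0)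
          + (∑ h, CP c t0 x0 k0 h * φ x0 h)) ≤ B * (lam * φ x0 k0) :=
        mul_le_mul_of_nonneg_left hlyap0 hBpos.le
      nlinarith [hQle, hble, hcple]
    have hterm2 : (sg bb0 * uP t0 x0 k0) * (-M * E0) = -M * (V + B * φ x0 k0) := by
      have h1 : sg bb0 * uP t0 x0 k0 * E0 = A * uP t0 x0 k0 := by
        rw [hAdef]; ring
      calc (sg bb0 * uP t0 x0 k0) * (-M * E0)
          = -M * (sg bb0 * uP t0 x0 k0 * E0) := by ring
        _ = -M * (A * uP t0 x0 k0) := by rw [h1]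
        _ = -M * (V + B * φ x0 k0) := by rw [hcoupeq]
    have hterm1 : (sg bb0 * D) * E0 = A * D := by rw [hAdef]; ring
    have hterm3 : (ε * (lam' * E1)) * φ x0 k0 = lam' * B * φ x0 k0 := by
      rw [hBdef]; ring
    have hφ0 : 0 < φ x0 k0 := hφpos x0 k0
    have habsM : 0 ≤ M + |M| := by
      have := neg_abs_le M; linarith
    have hfinal : (sg bb0 * D) * E0 + (sg bb0 * uP t0 x0 k0) * (-M * E0)
        - (ε * (lam' * E1)) * φ x0 k0 < 0 := by
      rw [hterm1, hterm2, hterm3]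
      have h1 : A * D + (-M * (V + B * φ x0 k0)) - lam' * B * φ x0 k0
          ≤ B * (lam * φ x0 k0) + M * V - M * V - M * B * φ x0 k0
            - lam' * B * φ x0 k0 := by linarith
      have h2 : B * (lam * φ x0 k0) + M * V - M * V - M * B * φ x0 k0
          - lam' * B * φ x0 k0 = B * φ x0 k0 * (lam - M - lam') := by ring
      have h3 : lam - M - lam' = -(M + |M|) - 1 := by rw [hlam'def]; ring
      have h4 : 0 < B * φ x0 k0 := mul_pos hBpos hφ0
      nlinarith
    linarith
  -- conclude from the key claim
  intro t ht x k
  have hE : Real.exp (-(M * (t - s))) * Real.exp (M * (t - s)) = 1 := by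
    rw [← Real.exp_add]
    simp
  have hEpos : 0 < Real.exp (-(M * (t - s))) := Real.exp_pos _
  have hboth : ∀ ε' : ℝ, 0 < ε' → |uP t x k| * Real.exp (-(M * (t - s))) ≤ F + ε' := by
    intro ε' hε'
    set C : ℝ := Real.exp (lam' * (t - s)) * φ x k with hCdef
    have hCpos : 0 < C := mul_pos (Real.exp_pos _) (hφpos x k)
    have hεdef : (0:ℝ) < ε' / C := div_pos hε' hCpos
    have h1 := key (ε' / C) hεdef true t ht x k
    have h2 := key (ε' / C) hεdef false t ht x k
    simp only [if_true, if_false] at h1 h2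
    have hCC : ε' / C * Real.exp (lam' * (t - s)) * φ x k = ε' := by
      rw [hCdef, mul_assoc, div_mul_cancel₀ _ hCpos.ne']
    rw [one_mul] at h1
    rw [hCC] at h1
    have h2b : (-1 : ℝ) * uP t x k * Real.exp (-(M * (t - s)))
        - ε' / C * Real.exp (lam' * (t - s)) * φ x k ≤ F := h2
    rw [hCC] at h2b
    have h3 : |uP t x k * Real.exp (-(M * (t - s)))| ≤ F + ε' :=
      abs_le.mpr ⟨by linarith, by linarith⟩
    calc |uP t x k| * Real.exp (-(M * (t - s)))
        = |uP t x k * Real.exp (-(M * (t - s)))| := by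
          rw [abs_mul, abs_of_pos hEpos]
      _ ≤ F + ε' := h3
  have h4 : |uP t x k| * Real.exp (-(M * (t - s))) ≤ F :=
    le_of_forall_pos_le_add hboth
  calc |uP t x k| = |uP t x k| * Real.exp (-(M * (t - s))) * Real.exp (M * (t - s)) := by
        rw [mul_assoc, hE, mul_one]
    _ ≤ F * Real.exp (M * (t - s)) :=
        mul_le_mul_of_nonneg_right h4 (Real.exp_pos _).le
    _ = Real.exp (M * (t - s)) * F := by ring
end
end

section
/- Assume Hypotheses (H). Fix s ∈ I, T > s and f ∈ C_b(ℝ^d;ℝ^m). Let u be the classical solution, bounded on every strip [s,T']×ℝ^d, of the Cauchy problem D_t u = 𝒜(t)u on (s,∞)×ℝ^d with u(s,·) = f, and let ũ^P be the classical solution, bounded on every strip, of D_t u = 𝒜^P(t)u with initial datum |f| = (|f_1|,…,|f_m|). Then |u_k(t,x)| ≤ |ũ^P_k(t,x)| for every k = 1,…,m and every (t,x) ∈ [s,T]×ℝ^d. -/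
open Set Filter Metric MeasureTheory
open scoped BigOperators Topology

noncomputable section

variable {d m : ℕ}

/-- If `g` has derivative `g'` at `t0` and `t0` minimizes `g` on `[s,t0]` with `s < t0`,
then `g' ≤ 0`. -/
lemma aux_deriv_nonpos {g : ℝ → ℝ} {g' s t0 : ℝ} (h : HasDerivAt g g' t0) (hst : s < t0)
    (hmin : ∀ t ∈ Icc s t0, g t0 ≤ g t) : g' ≤ 0 := by
  have hs := hasDerivAt_iff_tendsto_slope.mp h
  have h2 : Tendsto (slope g t0) (𝓝[<] t0) (𝓝 g') :=
    hs.mono_left (nhdsWithin_mono _ (fun x hx => ne_of_lt hx))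
  refine le_of_tendsto h2 ?_
  filter_upwards [Ioo_mem_nhdsLT_of_mem ⟨hst, le_refl t0⟩] with r hr
  have h1 : g t0 ≤ g r := hmin r ⟨le_of_lt hr.1, le_of_lt hr.2⟩
  rw [slope_def_field]
  exact div_nonpos_iff.mpr (Or.inl ⟨by linarith, by linarith [hr.2]⟩)

/-- 1-D second derivative test at a global minimum. -/
lemma aux_secondDeriv_nonneg {g g' : ℝ → ℝ} {a : ℝ}
    (hg : ∀ r, HasDerivAt g (g' r) r) (h2 : HasDerivAt g' a 0)
    (hmin : ∀ r, g 0 ≤ g r) : 0 ≤ a := by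
  have h0 : g' 0 = 0 :=
    IsLocalMin.hasDerivAt_eq_zero (Filter.Eventually.of_forall hmin) (hg 0)
  by_contra hneg
  push_neg at hneg
  have hs := hasDerivAt_iff_tendsto_slope.mp h2
  have hs' : Tendsto (slope g' 0) (𝓝[>] (0:ℝ)) (𝓝 a) :=
    hs.mono_left (nhdsWithin_mono _ (fun x hx => ne_of_gt hx))
  have hev : ∀ᶠ r in 𝓝[>] (0:ℝ), slope g' 0 r < a/2 :=
    hs'.eventually_lt_const (by linarith)
  rcases Metric.mem_nhdsWithin_iff.mp hev with ⟨δ, hδ, hsub⟩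
  have hneg' : ∀ r ∈ Ioo (0:ℝ) δ, g' r < 0 := by
    intro r hr
    have hmem : r ∈ Metric.ball (0:ℝ) δ ∩ Ioi 0 := by
      constructor
      · simp [Real.dist_eq, abs_of_pos hr.1, hr.2]
      · exact hr.1
    have := hsub hmem
    simp only [mem_setOf_eq, slope_def_field, h0] at this
    have hr0 : (0:ℝ) < r := hr.1
    rw [sub_zero, sub_zero, div_lt_iff₀ hr0] at this
    nlinarith
  obtain ⟨ξ, hξ, hslope⟩ := exists_hasDerivAt_eq_slope g g' (by positivity : (0:ℝ) < δ/2)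
    ((Differentiable.continuous fun r => (hg r).differentiableAt).continuousOn)
    (fun x _ => hg x)
  have h1 : g' ξ < 0 := hneg' ξ ⟨hξ.1, by linarith [hξ.2]⟩
  have h3 : 0 ≤ (g (δ/2) - g 0) / (δ/2 - 0) := by
    apply div_nonneg (by linarith [hmin (δ/2)]) (by linarith)
  rw [hslope] at h1
  linarith

lemma aux_diff_pd {f : Euc d → ℝ} (hf : ContDiff ℝ 2 f) (j : Fin d) :
    Differentiable ℝ (pd j f) := by
  have h1 : ContDiff ℝ 1 (fderiv ℝ f) := hf.fderiv_right (by norm_num)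
  have h2 : Differentiable ℝ (fderiv ℝ f) := h1.differentiable one_ne_zero
  exact h2.clm_apply (differentiable_const _)

lemma aux_pd_combo {f g : Euc d → ℝ} {x : Euc d}
    (hf : DifferentiableAt ℝ f x) (hg : DifferentiableAt ℝ g x) (A B : ℝ) (j : Fin d) :
    pd j (fun y => A * f y + B * g y) x = A * pd j f x + B * pd j g x := by
  unfold pd
  rw [fderiv_fun_add (hf.const_mul A) (hg.const_mul B), fderiv_const_mul hf A,
    fderiv_const_mul hg B]
  simp

lemma aux_pd2_combo {f g : Euc d → ℝ} (hf : ContDiff ℝ 2 f) (hg : ContDiff ℝ 2 g)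
    (A B : ℝ) (i j : Fin d) (x : Euc d) :
    pd2 i j (fun y => A * f y + B * g y) x = A * pd2 i j f x + B * pd2 i j g x := by
  unfold pd2
  have h1 : (fun y => pd j (fun z => A * f z + B * g z) y)
      = fun y => A * pd j f y + B * pd j g y := by
    funext y
    exact aux_pd_combo (hf.differentiable (by norm_num) y)
      (hg.differentiable (by norm_num) y) A B j
  rw [h1, fderiv_fun_add ((aux_diff_pd hf j x).const_mul A) ((aux_diff_pd hg j x).const_mul B),
    fderiv_const_mul (aux_diff_pd hf j x) A, fderiv_const_mul (aux_diff_pd hg j x) B]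
  simp

lemma aux_hessian {F : Euc d → ℝ} {x0 : Euc d} (hF : ContDiff ℝ 2 F)
    (hmin : ∀ y, F x0 ≤ F y) :
    (∀ j, pd j F x0 = 0) ∧
      ∀ ξ : Fin d → ℝ, 0 ≤ ∑ i, ∑ j, pd2 i j F x0 * ξ i * ξ j := by
  have hFd : Differentiable ℝ F := hF.differentiable (by norm_num)
  have hD1 : ContDiff ℝ 1 (fderiv ℝ F) := hF.fderiv_right (by norm_num)
  have hD1d : Differentiable ℝ (fderiv ℝ F) := hD1.differentiable one_ne_zero
  set B := fderiv ℝ (fderiv ℝ F) x0 with hBdef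
  have hloc : IsLocalMin F x0 := Filter.Eventually.of_forall hmin
  have hfz : fderiv ℝ F x0 = 0 := hloc.fderiv_eq_zero
  constructor
  · intro j
    unfold pd
    rw [hfz]
    rfl
  -- pd2 in terms of B
  have hpd2 : ∀ i j, pd2 i j F x0 = B (EuclideanSpace.single i 1) (EuclideanSpace.single j 1) := by
    intro i j
    unfold pd2 pd
    rw [fderiv_clm_apply (hD1d x0) (differentiableAt_const _)]
    simp
    rfl
  -- quadratic form of B is psd
  have hq : ∀ η : Euc d, 0 ≤ B η η := by
    intro η
    set L : ℝ → Euc d := fun r => x0 + r • η with hL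
    have hLd : ∀ r, HasDerivAt L η r := by
      intro r
      have : HasDerivAt (fun r : ℝ => r • η) ((1:ℝ) • η) r := (hasDerivAt_id r).smul_const η
      have h := this.const_add x0
      rw [one_smul] at h
      exact h
    set g : ℝ → ℝ := fun r => F (L r) with hg
    set g' : ℝ → ℝ := fun r => fderiv ℝ F (L r) η with hg'
    have hgd : ∀ r, HasDerivAt g (g' r) r := fun r =>
      (hFd (L r)).hasFDerivAt.comp_hasDerivAt r (hLd r)
    have hL0 : L 0 = x0 := by simp [hL]
    have hψ : HasDerivAt (fun r => fderiv ℝ F (L r)) (B η) 0 := by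
      have h1 : HasFDerivAt (fderiv ℝ F) B (L 0) := by
        rw [hL0]; exact (hD1d x0).hasFDerivAt
      have := h1.comp_hasDerivAt 0 (hLd 0)
      exact this
    have hg'd : HasDerivAt g' (B η η) 0 := by
      have := hψ.clm_apply (hasDerivAt_const 0 η)
      simpa using this
    have hgmin : ∀ r, g 0 ≤ g r := by
      intro r
      simp only [hg, hL0]
      exact hmin _
    exact aux_secondDeriv_nonneg hgd hg'd hgmin
  intro ξ
  set η : Euc d := ∑ i, ξ i • EuclideanSpace.single i (1:ℝ) with hη
  have e1 : ∀ (T : Euc d →L[ℝ] ℝ), T η = ∑ j, ξ j * T (EuclideanSpace.single j 1) := by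
    intro T
    rw [hη, map_sum]
    exact Finset.sum_congr rfl fun j _ => by rw [_root_.map_smul]; simp
  have e2a : B η = ∑ i, ξ i • B (EuclideanSpace.single i 1) := by
    rw [hη, map_sum]
    exact Finset.sum_congr rfl fun i _ => by rw [_root_.map_smul]
  have e2 : B η η = ∑ i, ξ i * (B (EuclideanSpace.single i 1)) η := by
    rw [e2a, ContinuousLinearMap.sum_apply]
    exact Finset.sum_congr rfl fun i _ => by simp
  have key : ∑ i, ∑ j, pd2 i j F x0 * ξ i * ξ j = B η η := by
    rw [e2]
    refine Finset.sum_congr rfl fun i _ => ?_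
    rw [e1 (B (EuclideanSpace.single i 1)), Finset.mul_sum]
    refine Finset.sum_congr rfl fun j _ => ?_
    rw [hpd2]
    ring
  rw [key]
  exact hq η

lemma aux_psd_factor {d : ℕ} (A : Matrix (Fin d) (Fin d) ℝ) (h : A.PosSemidef) :
    ∃ (n : ℕ) (B : Matrix (Fin n) (Fin d) ℝ), A = B.conjTranspose * B := by
  obtain ⟨n, v, hv⟩ := Matrix.posSemidef_iff_eq_sum_vecMulVec.mp h
  refine ⟨n, Matrix.of fun l i => v l i, ?_⟩
  rw [hv]; ext i j
  simp [Matrix.mul_apply, Matrix.vecMulVec_apply, Matrix.sum_apply, mul_comm]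

/-- Pairing of two psd quadratic forms is nonnegative. -/
lemma aux_trace_pair (Q H : Fin d → Fin d → ℝ)
    (hQsym : ∀ i j, Q i j = Q j i)
    (hQ : ∀ ξ : Fin d → ℝ, 0 ≤ ∑ i, ∑ j, Q i j * ξ i * ξ j)
    (hH : ∀ ξ : Fin d → ℝ, 0 ≤ ∑ i, ∑ j, H i j * ξ i * ξ j) :
    0 ≤ ∑ i, ∑ j, Q i j * H i j := by
  classical
  set A : Matrix (Fin d) (Fin d) ℝ := Matrix.of Q with hA
  have hpsd : A.PosSemidef := by
    refine Matrix.PosSemidef.of_dotProduct_mulVec_nonneg ?_ ?_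
    · ext i j
      simpa [Matrix.conjTranspose, hA] using hQsym j i
    · intro x
      have := hQ x
      simp only [dotProduct, Matrix.mulVec, Pi.star_apply, star_trivial, hA]
      calc (0:ℝ) ≤ ∑ i, ∑ j, Q i j * x i * x j := this
        _ = ∑ i, x i * ∑ j, Q i j * x j := by
            refine Finset.sum_congr rfl fun i _ => ?_
            rw [Finset.mul_sum]
            exact Finset.sum_congr rfl fun j _ => by ring
        _ = ∑ i, x i * (Matrix.of Q).mulVec x i := by
            refine Finset.sum_congr rfl fun i _ => ?_
            simp [Matrix.mulVec, dotProduct]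
  obtain ⟨_, Bm, hBm⟩ := aux_psd_factor A hpsd
  have hentry : ∀ i j, Q i j = ∑ l, Bm l i * Bm l j := by
    intro i j
    have := congrArg (fun M => M i j) hBm
    simpa [hA, Matrix.mul_apply, Matrix.conjTranspose_apply] using this
  calc (0:ℝ) ≤ ∑ l, ∑ i, ∑ j, H i j * Bm l i * Bm l j :=
        Finset.sum_nonneg fun l _ => hH (fun i => Bm l i)
    _ = ∑ i, ∑ j, Q i j * H i j := by
        rw [Finset.sum_comm]
        refine Finset.sum_congr rfl fun i _ => ?_
        rw [Finset.sum_comm]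
        refine Finset.sum_congr rfl fun j _ => ?_
        rw [hentry i j, Finset.sum_mul]
        exact Finset.sum_congr rfl fun l _ => by ring

/-- Positive lower bound on `minEig` gives a nonnegative quadratic form. -/
lemma aux_minEig_psd {Q : Fin d → Fin d → ℝ} {μ0 : ℝ} (hμ : 0 < μ0)
    (h : μ0 ≤ minEig Q) (ξ : Fin d → ℝ) : 0 ≤ ∑ i, ∑ j, Q i j * ξ i * ξ j := by
  classical
  set η : Euc d := (WithLp.equiv 2 _).symm ξ with hη
  have hηξ : ∀ i, η i = ξ i := fun i => rfl
  by_cases h0 : η = 0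
  · have : ∀ i, ξ i = 0 := by
      intro i; rw [← hηξ i, h0]; rfl
    simp [this]
  · have hn : 0 < ‖η‖ := norm_pos_iff.mpr h0
    set c : ℝ := ‖η‖⁻¹ with hc
    set ζ : Euc d := c • η with hζ
    have hζ1 : ‖ζ‖ = 1 := by
      rw [hζ, norm_smul, hc]
      simp [abs_of_pos (inv_pos.mpr hn), inv_mul_cancel₀ (ne_of_gt hn)]
    have hmem : (∑ i, ∑ j, Q i j * ζ i * ζ j) ∈
        {r : ℝ | ∃ ξ : Euc d, ‖ξ‖ = 1 ∧ r = ∑ i, ∑ j, Q i j * ξ i * ξ j} := ⟨ζ, hζ1, rfl⟩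
    -- the Rayleigh set is bounded below
    have himg : {r : ℝ | ∃ ξ : Euc d, ‖ξ‖ = 1 ∧ r = ∑ i, ∑ j, Q i j * ξ i * ξ j}
        = (fun ξ : Euc d => ∑ i, ∑ j, Q i j * ξ i * ξ j) '' Metric.sphere 0 1 := by
      ext r
      simp only [mem_setOf_eq, mem_image, mem_sphere_iff_norm, sub_zero]
      constructor
      · rintro ⟨ξ, h1, h2⟩; exact ⟨ξ, h1, h2.symm⟩
      · rintro ⟨ξ, h1, h2⟩; exact ⟨ξ, h1, h2.symm⟩
    have hcont : Continuous (fun ξ : Euc d => ∑ i, ∑ j, Q i j * ξ i * ξ j) := by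
      refine continuous_finset_sum _ fun i _ => continuous_finset_sum _ fun j _ => ?_
      exact (continuous_const.mul (PiLp.continuous_apply _ _ i)).mul (PiLp.continuous_apply _ _ j)
    have hbdd : BddBelow {r : ℝ | ∃ ξ : Euc d, ‖ξ‖ = 1 ∧ r = ∑ i, ∑ j, Q i j * ξ i * ξ j} := by
      rw [himg]
      exact ((isCompact_sphere 0 1).image hcont).bddBelow
    have hge : μ0 ≤ ∑ i, ∑ j, Q i j * ζ i * ζ j := le_trans h (csInf_le hbdd hmem)
    have hsc : ∑ i, ∑ j, Q i j * ζ i * ζ j = c^2 * ∑ i, ∑ j, Q i j * ξ i * ξ j := by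
      rw [Finset.mul_sum]
      refine Finset.sum_congr rfl fun i _ => ?_
      rw [Finset.mul_sum]
      refine Finset.sum_congr rfl fun j _ => ?_
      have h1 : ζ i = c * ξ i := by rw [hζ]; simp [hηξ]
      have h2 : ζ j = c * ξ j := by rw [hζ]; simp [hηξ]
      rw [h1, h2]; ring
    have hc2 : 0 < c^2 := by positivity
    nlinarith [hge, hsc]

lemma aux_sum_split {ι : Type*} (u : Finset ι) (X Y Z : ι → ℝ) (A B : ℝ) :
    ∑ j ∈ u, X j * (A * Y j + B * Z j)
      = A * ∑ j ∈ u, X j * Y j + B * ∑ j ∈ u, X j * Z j := by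
  rw [Finset.mul_sum, Finset.mul_sum, ← Finset.sum_add_distrib]
  exact Finset.sum_congr rfl fun j _ => by ring

set_option maxHeartbeats 1000000 in
lemma maxPrinciple {ι : Type*} [Fintype ι]
    (s T : ℝ) (hsT : s < T)
    (QQ : ι → ℝ → Euc d → Fin d → Fin d → ℝ)
    (bb : ι → ℝ → Euc d → Fin d → ℝ)
    (CC : ℝ → Euc d → ι → ι → ℝ)
    (M lam : ℝ)
    (φ : Euc d → ι → ℝ)
    (w : ℝ → Euc d → ι → ℝ)
    (hQ : ∀ k, ∀ t ∈ Icc s T, ∀ x : Euc d, ∀ ξ : Fin d → ℝ,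
      0 ≤ ∑ i, ∑ j, QQ k t x i j * ξ i * ξ j)
    (hQsym : ∀ k t x i j, QQ k t x i j = QQ k t x j i)
    (hCoff : ∀ t ∈ Icc s T, ∀ x : Euc d, ∀ k h : ι, k ≠ h → 0 ≤ CC t x k h)
    (hCrow : ∀ t ∈ Icc s T, ∀ x : Euc d, ∀ k, ∑ h, CC t x k h ≤ M)
    (hφ2 : ∀ k, ContDiff ℝ 2 (fun x => φ x k))
    (hφpos : ∀ x k, 0 < φ x k)
    (hφinf : ∀ k, Tendsto (fun x => φ x k) (cocompact (Euc d)) atTop)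
    (hφsuper : ∀ t ∈ Icc s T, ∀ x k,
      (∑ i, ∑ j, QQ k t x i j * pd2 i j (fun y => φ y k) x)
        + (∑ j, bb k t x j * pd j (fun y => φ y k) x)
        + (∑ h, CC t x k h * φ x h) ≤ lam * φ x k)
    (hwc : ∀ k, ContinuousOn (fun p : ℝ × Euc d => w p.1 p.2 k) (Icc s T ×ˢ univ))
    (hw2 : ∀ t ∈ Ioc s T, ∀ k, ContDiff ℝ 2 (fun x => w t x k))
    (hwt : ∀ t ∈ Ioc s T, ∀ x : Euc d, ∀ k, HasDerivAt (fun r => w r x k)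
      ((∑ i, ∑ j, QQ k t x i j * pd2 i j (fun y => w t y k) x)
        + (∑ j, bb k t x j * pd j (fun y => w t y k) x)
        + (∑ h, CC t x k h * w t x h)) t)
    (hwb : ∃ K, ∀ t ∈ Icc s T, ∀ x : Euc d, ∀ k, |w t x k| ≤ K)
    (hw0 : ∀ x : Euc d, ∀ k, 0 ≤ w s x k) :
    ∀ t ∈ Icc s T, ∀ x : Euc d, ∀ k, 0 ≤ w t x k := by
  classical
  obtain ⟨K0, hK0⟩ := hwb
  set K : ℝ := |K0| with hKdef
  have hK : ∀ t ∈ Icc s T, ∀ x : Euc d, ∀ k, |w t x k| ≤ K :=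
    fun t ht x k => le_trans (hK0 t ht x k) (le_abs_self K0)
  have hKnn : 0 ≤ K := abs_nonneg _
  set μ : ℝ := |lam| + |M| + 1 with hμdef
  have hμpos : 0 < μ := by positivity
  -- main claim with the penalization
  have main : ∀ ε > 0, ∀ t ∈ Icc s T, ∀ x : Euc d, ∀ k,
      0 ≤ Real.exp (-M*t) * w t x k + ε * Real.exp (μ*t) * φ x k := by
    intro ε hε
    by_contra hcon
    push_neg at hcon
    obtain ⟨t1, ht1, x1, k1, hneg⟩ := hcon
    haveI : Nonempty ι := ⟨k1⟩
    set v : ℝ → Euc d → ι → ℝ :=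
      fun t x k => Real.exp (-M*t) * w t x k + ε * Real.exp (μ*t) * φ x k with hv
    have hexpc1 : Continuous fun p : ℝ × Euc d => Real.exp (-M*p.1) :=
      Real.continuous_exp.comp (continuous_const.mul continuous_fst)
    have hexpc2 : Continuous fun p : ℝ × Euc d => ε * Real.exp (μ*p.1) :=
      continuous_const.mul (Real.continuous_exp.comp (continuous_const.mul continuous_fst))
    have hvc : ∀ k, ContinuousOn (fun p : ℝ × Euc d => v p.1 p.2 k) (Icc s T ×ˢ univ) := by
      intro k
      apply ContinuousOn.add
      · exact hexpc1.continuousOn.mul (hwc k)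
      · exact (hexpc2.mul ((hφ2 k).continuous.comp continuous_snd)).continuousOn
    -- bound for the exponential weight
    set E0 : ℝ := max (Real.exp (-M*s)) (Real.exp (-M*T)) with hE0def
    have hE0pos : 0 < E0 := lt_of_lt_of_le (Real.exp_pos _) (le_max_left _ _)
    have hEbound : ∀ t ∈ Icc s T, Real.exp (-M*t) ≤ E0 := by
      intro t ht
      rcases le_or_gt 0 M with hM | hM
      · exact le_max_of_le_left (Real.exp_le_exp.mpr
          (by nlinarith [mul_nonneg hM (sub_nonneg.mpr ht.1)]))
      · exact le_max_of_le_right (Real.exp_le_exp.mpr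
          (by nlinarith [mul_nonneg (neg_nonneg.mpr hM.le) (sub_nonneg.mpr ht.2)]))
    have hexμ : ∀ t ∈ Icc s T, Real.exp (μ*s) ≤ Real.exp (μ*t) :=
      fun t ht => Real.exp_le_exp.mpr (mul_le_mul_of_nonneg_left ht.1 hμpos.le)
    -- outside a compact set, v is positive
    have hout : ∀ k, ∃ S : Set (Euc d), IsCompact S ∧
        ∀ x ∉ S, ∀ t ∈ Icc s T, 0 < v t x k := by
      intro k
      set B : ℝ := (E0 * K + 1)/(ε * Real.exp (μ*s)) with hBdef
      have hBpos : 0 < B := by positivity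
      have hBs := (hφinf k).eventually (eventually_ge_atTop B)
      rcases mem_cocompact.mp hBs with ⟨S, hScomp, hSsub⟩
      refine ⟨S, hScomp, fun x hx t ht => ?_⟩
      have hφB : B ≤ φ x k := hSsub hx
      have hwle : -K ≤ w t x k := (abs_le.mp (hK t ht x k)).1
      have hexp_pos : (0:ℝ) < Real.exp (-M*t) := Real.exp_pos _
      have h1 : Real.exp (-M*t) * (-K) ≤ Real.exp (-M*t) * w t x k :=
        mul_le_mul_of_nonneg_left hwle hexp_pos.le
      have h1' : E0 * (-K) ≤ Real.exp (-M*t) * (-K) := by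
        nlinarith [hEbound t ht]
      have hBval : ε * Real.exp (μ*s) * B = E0 * K + 1 := by
        rw [hBdef]
        field_simp
      have h2 : ε * Real.exp (μ*s) * B ≤ ε * Real.exp (μ*t) * φ x k := by
        have e1 : ε * Real.exp (μ*s) * B ≤ ε * Real.exp (μ*t) * B :=
          mul_le_mul_of_nonneg_right
            (mul_le_mul_of_nonneg_left (hexμ t ht) hε.le) hBpos.le
        have e2 : ε * Real.exp (μ*t) * B ≤ ε * Real.exp (μ*t) * φ x k :=
          mul_le_mul_of_nonneg_left hφB (by positivity)
        linarith
      simp only [hv]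
      linarith [h1, h1', h2, hBval]
    choose S hScomp hSpos using hout
    -- a big closed ball
    set Stot : Set (Euc d) := (⋃ k, S k) ∪ {x1} with hStot
    have hStotc : IsCompact Stot := (isCompact_iUnion fun k => hScomp k).union isCompact_singleton
    obtain ⟨R, hRsub⟩ := hStotc.isBounded.subset_closedBall (0 : Euc d)
    set KK : Set (ℝ × Euc d) := Icc s T ×ˢ Metric.closedBall (0:Euc d) R with hKK
    have hKKc : IsCompact KK := isCompact_Icc.prod (isCompact_closedBall _ _)
    have hx1R : x1 ∈ Metric.closedBall (0:Euc d) R :=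
      hRsub (mem_union_right _ rfl)
    have hKKne : ((t1, x1) : ℝ × Euc d) ∈ KK := ⟨ht1, hx1R⟩
    -- minimizers
    have hminex : ∀ k, ∃ p ∈ KK, ∀ q ∈ KK, v p.1 p.2 k ≤ v q.1 q.2 k := by
      intro k
      rcases hKKc.exists_isMinOn ⟨(t1,x1), hKKne⟩
        ((hvc k).mono (fun p hp => ⟨hp.1, mem_univ _⟩)) with ⟨q, hq, hmin⟩
      exact ⟨q, hq, fun r hr => hmin hr⟩
    choose p hpmem hpmin using hminex
    obtain ⟨k0, -, hk0⟩ := Finset.exists_min_image Finset.univ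
      (fun k => v (p k).1 (p k).2 k) ⟨k1, Finset.mem_univ k1⟩
    set t0 : ℝ := (p k0).1 with ht0def
    set x0 : Euc d := (p k0).2 with hx0def
    set mstar : ℝ := v t0 x0 k0 with hmstar
    have ht0 : t0 ∈ Icc s T := (hpmem k0).1
    have hx0R : x0 ∈ Metric.closedBall (0:Euc d) R := (hpmem k0).2
    have hmneg : mstar < 0 := by
      have h1 : mstar ≤ v (p k1).1 (p k1).2 k1 := hk0 k1 (Finset.mem_univ k1)
      have h2 : v (p k1).1 (p k1).2 k1 ≤ v t1 x1 k1 := hpmin k1 (t1,x1) hKKne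
      have h3 : v t1 x1 k1 < 0 := hneg
      linarith
    -- global minimality
    have hglob : ∀ t ∈ Icc s T, ∀ x : Euc d, ∀ k, mstar ≤ v t x k := by
      intro t ht x k
      by_cases hx : x ∈ Metric.closedBall (0:Euc d) R
      · exact le_trans (hk0 k (Finset.mem_univ k)) (hpmin k (t,x) ⟨ht, hx⟩)
      · have hxS : x ∉ S k := fun hmem =>
          hx (hRsub (mem_union_left _ (mem_iUnion.mpr ⟨k, hmem⟩)))
        exact le_of_lt (lt_trans hmneg (hSpos k x hxS t ht))
    -- t0 > s
    have ht0s : s < t0 := by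
      rcases lt_or_eq_of_le ht0.1 with h | h
      · exact h
      · exfalso
        have hvpos : 0 < v s x0 k0 := by
          simp only [hv]
          have h1 : 0 ≤ Real.exp (-M*s) * w s x0 k0 :=
            mul_nonneg (Real.exp_pos _).le (hw0 x0 k0)
          have h2 : 0 < ε * Real.exp (μ*s) * φ x0 k0 := by
            have := hφpos x0 k0
            positivity
          linarith
        rw [h] at hvpos
        rw [hmstar] at hmneg
        linarith
    have ht0Ioc : t0 ∈ Ioc s T := ⟨ht0s, ht0.2⟩
    -- abbreviations at the minimum point
    set Ew : ℝ := Real.exp (-M*t0) with hEw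
    set Gp : ℝ := ε * Real.exp (μ*t0) with hGp
    have hEwpos : 0 < Ew := Real.exp_pos _
    have hGppos : 0 < Gp := by rw [hGp]; positivity
    set A2w : ℝ := ∑ i, ∑ j, QQ k0 t0 x0 i j * pd2 i j (fun y => w t0 y k0) x0 with hA2w
    set A1w : ℝ := ∑ j, bb k0 t0 x0 j * pd j (fun y => w t0 y k0) x0 with hA1w
    set Cw : ℝ := ∑ h, CC t0 x0 k0 h * w t0 x0 h with hCw
    set A2p : ℝ := ∑ i, ∑ j, QQ k0 t0 x0 i j * pd2 i j (fun y => φ y k0) x0 with hA2p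
    set A1p : ℝ := ∑ j, bb k0 t0 x0 j * pd j (fun y => φ y k0) x0 with hA1p
    set Cp : ℝ := ∑ h, CC t0 x0 k0 h * φ x0 h with hCp
    -- time derivative of v at the minimum is ≤ 0
    have hder1 : HasDerivAt (fun r => Real.exp (-M*r) * w r x0 k0)
        (Real.exp (-M*t0) * (-M*1) * w t0 x0 k0 + Real.exp (-M*t0) * (A2w + A1w + Cw)) t0 := by
      have h1 : HasDerivAt (fun r : ℝ => -M*r) (-M*1) t0 := (hasDerivAt_id t0).const_mul (-M)
      exact (h1.exp).mul (hwt t0 ht0Ioc x0 k0)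
    have hder2 : HasDerivAt (fun r => ε * Real.exp (μ*r) * φ x0 k0)
        (ε * (Real.exp (μ*t0) * (μ*1)) * φ x0 k0) t0 := by
      have h1 : HasDerivAt (fun r : ℝ => μ*r) (μ*1) t0 := (hasDerivAt_id t0).const_mul μ
      exact ((h1.exp).const_mul ε).mul_const (φ x0 k0)
    have hgd : HasDerivAt (fun r => v r x0 k0)
        (Real.exp (-M*t0) * (-M*1) * w t0 x0 k0 + Real.exp (-M*t0) * (A2w + A1w + Cw)
          + ε * (Real.exp (μ*t0) * (μ*1)) * φ x0 k0) t0 := hder1.add hder2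
    have hDle : Real.exp (-M*t0) * (-M*1) * w t0 x0 k0 + Real.exp (-M*t0) * (A2w + A1w + Cw)
          + ε * (Real.exp (μ*t0) * (μ*1)) * φ x0 k0 ≤ 0 := by
      refine aux_deriv_nonpos hgd ht0s ?_
      intro t ht
      exact hglob t ⟨ht.1, le_trans ht.2 ht0.2⟩ x0 k0
    -- spatial minimum
    set F : Euc d → ℝ := fun y => Ew * w t0 y k0 + Gp * φ y k0 with hF
    have hF2 : ContDiff ℝ 2 F :=
      (contDiff_const.mul (hw2 t0 ht0Ioc k0)).add (contDiff_const.mul (hφ2 k0))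
    have hFmin : ∀ y, F x0 ≤ F y := by
      intro y
      have h1 := hglob t0 ht0 y k0
      have h2 : v t0 y k0 = F y := by simp only [hv, hF, hEw, hGp]
      have h3 : mstar = F x0 := by simp only [hmstar, hv, hF, hEw, hGp]
      linarith
    obtain ⟨hgrad, hhess⟩ := aux_hessian hF2 hFmin
    -- linearity of derivatives
    have hpdF : ∀ j, pd j F x0 = Ew * pd j (fun y => w t0 y k0) x0
        + Gp * pd j (fun y => φ y k0) x0 := by
      intro j
      exact aux_pd_combo ((hw2 t0 ht0Ioc k0).differentiable (by norm_num) x0)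
        ((hφ2 k0).differentiable (by norm_num) x0) Ew Gp j
    have hpd2F : ∀ i j, pd2 i j F x0 = Ew * pd2 i j (fun y => w t0 y k0) x0
        + Gp * pd2 i j (fun y => φ y k0) x0 := by
      intro i j
      exact aux_pd2_combo (hw2 t0 ht0Ioc k0) (hφ2 k0) Ew Gp i j x0
    -- f1 : second-order term nonneg
    have f1 : 0 ≤ Ew * A2w + Gp * A2p := by
      have h0 : 0 ≤ ∑ i, ∑ j, QQ k0 t0 x0 i j * pd2 i j F x0 :=
        aux_trace_pair _ _ (hQsym k0 t0 x0) (hQ k0 t0 ht0 x0) hhess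
      have h1 : ∑ i, ∑ j, QQ k0 t0 x0 i j * pd2 i j F x0 = Ew * A2w + Gp * A2p := by
        rw [hA2w, hA2p, Finset.mul_sum, Finset.mul_sum, ← Finset.sum_add_distrib]
        refine Finset.sum_congr rfl fun i _ => ?_
        rw [← aux_sum_split]
        exact Finset.sum_congr rfl fun j _ => by rw [hpd2F i j]
      rw [h1] at h0
      exact h0
    -- f2 : first-order term vanishes
    have f2 : Ew * A1w + Gp * A1p = 0 := by
      have h1 : ∑ j, bb k0 t0 x0 j * pd j F x0 = Ew * A1w + Gp * A1p := by
        rw [hA1w, hA1p, ← aux_sum_split]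
        exact Finset.sum_congr rfl fun j _ => by rw [hpdF j]
      have h2 : ∑ j, bb k0 t0 x0 j * pd j F x0 = 0 := by
        refine Finset.sum_eq_zero fun j _ => ?_
        rw [hgrad j, mul_zero]
      rw [← h1, h2]
    -- f3 : coupling term bound
    have f3 : M * mstar ≤ Ew * Cw + Gp * Cp := by
      have h1 : (∑ h, CC t0 x0 k0 h) * mstar ≤ ∑ h, CC t0 x0 k0 h * v t0 x0 h := by
        rw [Finset.sum_mul]
        refine Finset.sum_le_sum fun h _ => ?_
        by_cases hh : h = k0
        · subst hh
          exact le_of_eq (by rw [hmstar])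
        · have hC := hCoff t0 ht0 x0 k0 h (fun he => hh he.symm)
          exact mul_le_mul_of_nonneg_left (hglob t0 ht0 x0 h) hC
      have h2 : ∑ h, CC t0 x0 k0 h * v t0 x0 h = Ew * Cw + Gp * Cp := by
        rw [hCw, hCp, ← aux_sum_split]
        all_goals refine Finset.sum_congr rfl fun h _ => by simp only [hv, hEw, hGp]
      have h3 : M * mstar ≤ (∑ h, CC t0 x0 k0 h) * mstar :=
        mul_le_mul_of_nonpos_right (hCrow t0 ht0 x0 k0) hmneg.le
      rw [h2] at h1
      linarith
    -- f4 : Lyapunov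
    have f4 : A2p + A1p + Cp ≤ lam * φ x0 k0 := hφsuper t0 ht0 x0 k0
    have hf4' : Gp * (A2p + A1p + Cp) ≤ Gp * (lam * φ x0 k0) :=
      mul_le_mul_of_nonneg_left f4 hGppos.le
    -- f5 : value at the minimum
    have f5 : Ew * w t0 x0 k0 = mstar - Gp * φ x0 k0 := by
      simp only [hmstar, hv, hEw, hGp]
      ring
    have hf5M : M * (Ew * w t0 x0 k0) = M * mstar - M * (Gp * φ x0 k0) := by
      rw [f5]; ring
    -- f7 : μ + M - lam ≥ 1
    have f7 : (1:ℝ) ≤ μ + M - lam := by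
      rw [hμdef]
      have h1 := le_abs_self lam
      have h2 := neg_abs_le M
      linarith
    have hφ0pos : 0 < φ x0 k0 := hφpos x0 k0
    have hP : 0 < Gp * φ x0 k0 := mul_pos hGppos hφ0pos
    have hf7p : 1 * (Gp * φ x0 k0) ≤ (μ + M - lam) * (Gp * φ x0 k0) :=
      mul_le_mul_of_nonneg_right f7 hP.le
    -- rewrite the time-derivative bound in terms of the abbreviations
    have hDexp : Real.exp (-M*t0) * (-M*1) * w t0 x0 k0 = -(M * (Ew * w t0 x0 k0)) := by
      rw [hEw]; ring
    have hDmid : Real.exp (-M*t0) * (A2w + A1w + Cw) = Ew * A2w + Ew * A1w + Ew * Cw := by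
      rw [hEw]; ring
    have hGpμ : ε * (Real.exp (μ*t0) * (μ*1)) * φ x0 k0 = μ * (Gp * φ x0 k0) := by
      rw [hGp]; ring
    linarith [hDle, hDexp, hDmid, hGpμ, hf5M, f1, f2, f3, hf4', hf7p, hP]
  -- conclude from the penalized inequality
  intro t ht x k
  have hE : (0:ℝ) < Real.exp (-M*t) := Real.exp_pos _
  have hC : (0:ℝ) < Real.exp (μ*t) * φ x k := mul_pos (Real.exp_pos _) (hφpos x k)
  by_contra hneg
  push_neg at hneg
  have hwneg : Real.exp (-M*t) * w t x k < 0 := mul_neg_of_pos_of_neg hE hneg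
  set a : ℝ := Real.exp (-M*t) * w t x k with ha
  set C : ℝ := Real.exp (μ*t) * φ x k with hCd
  have hεpos : 0 < -a / (2*C) := div_pos (by linarith) (by linarith)
  have hmain := main (-a / (2*C)) hεpos t ht x k
  have hexp : -a / (2*C) * Real.exp (μ*t) * φ x k = -a/2 := by
    rw [hCd]
    field_simp
    rw [mul_div_cancel_right₀ _ (hφpos x k).ne']
  nlinarith [hmain, hexp]

/-- Sign attached to the two copies in the doubled system. -/
def sgn : Bool → ℝ := fun e => if e then 1 else -1

/-- Coupling matrix of the doubled system. -/
def CCdef (c : ℝ → Euc d → Fin m → Fin m → ℝ) :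
    ℝ → Euc d → (Bool × Fin m) → (Bool × Fin m) → ℝ :=
  fun t x p q =>
    if p.2 = q.2 then (if p.1 = q.1 then c t x p.2 q.2 else 0)
    else (if p.1 = q.1 then (|c t x p.2 q.2| + c t x p.2 q.2)/2
          else (|c t x p.2 q.2| - c t x p.2 q.2)/2)

lemma sgn_not (e : Bool) : sgn (!e) = -sgn e := by cases e <;> simp [sgn]

lemma aux_CC_master (c : ℝ → Euc d → Fin m → Fin m → ℝ) (t : ℝ) (x : Euc d)
    (k : Fin m) (e : Bool) (A a : Fin m → ℝ) :
    ∑ q : Bool × Fin m, CCdef c t x (e, k) q * (A q.2 - sgn q.1 * a q.2)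
      = (∑ h, CP c t x k h * A h) - sgn e * ∑ h, c t x k h * a h := by
  rw [Fintype.sum_prod_type, Finset.sum_comm, Finset.mul_sum, ← Finset.sum_sub_distrib]
  refine Finset.sum_congr rfl fun h _ => ?_
  rw [Fintype.sum_bool]
  by_cases hkh : k = h <;> cases e <;>
    simp [CCdef, CP, sgn, hkh] <;> ring

/-- Proposition 2.6(ii), comparison part: the solution of the Cauchy problem
for `𝒜` is dominated componentwise by the solution of the Cauchy problem for `𝒜^P`
with datum `|f|`. -/
theorem statement_3 {d m : ℕ} (hd : 1 ≤ d) (hm : 2 ≤ m)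
    (I : Set ℝ) (hI : IsRightHalfline I)
    (Q : Fin m → ℝ → Euc d → Fin d → Fin d → ℝ)
    (b : Fin m → ℝ → Euc d → Fin d → ℝ)
    (c : ℝ → Euc d → Fin m → Fin m → ℝ)
    (hH : Hyp I Q b c)
    (s T : ℝ) (hs : s ∈ I) (hT : T ∈ I) (hsT : s < T)
    (f : Euc d → Fin m → ℝ) (hf : IsBddContinuous f)
    (u : ℝ → Euc d → Fin m → ℝ)
    (hu : ClassicalSol Q b c s f u) (hub : BddOnStrips s u)
    (uP : ℝ → Euc d → Fin m → ℝ)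
    (huP : ClassicalSol Q b (CP c) s (fun x k => |f x k|) uP) (huPb : BddOnStrips s uP) :
    ∀ k : Fin m, ∀ t ∈ Icc s T, ∀ x : Euc d, |u t x k| ≤ |uP t x k| := by
  classical
  have hJI : Icc s T ⊆ I := by
    rcases hI with ⟨a, rfl⟩ | rfl
    · exact fun t ht => le_trans (mem_Ici.mp hs) ht.1
    · exact subset_univ _
  have hJb : Bornology.IsBounded (Icc s T) := Metric.isBounded_Icc s T
  obtain ⟨φ, lam, hlampos, hφ2, hφpos, hφinf, hφsup⟩ := hH.lyap (Icc s T) hJI hJb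
  obtain ⟨M, hM⟩ := hH.rowBdd (Icc s T) hJI hJb
  obtain ⟨K1, hK1⟩ := hub T hsT
  obtain ⟨K2, hK2⟩ := huPb T hsT
  -- the doubled system
  set W : ℝ → Euc d → (Bool × Fin m) → ℝ :=
    fun t x p => uP t x p.2 - sgn p.1 * u t x p.2 with hW
  have key : ∀ t ∈ Icc s T, ∀ x : Euc d, ∀ p : Bool × Fin m, 0 ≤ W t x p := by
    refine maxPrinciple s T hsT (fun p => Q p.2) (fun p => b p.2) (CCdef c) M lam
      (fun x p => φ x p.2) W ?_ ?_ ?_ ?_ ?_ ?_ ?_ ?_ ?_ ?_ ?_ ?_ ?_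
    · -- ellipticity
      intro p t ht x ξ
      obtain ⟨μ0, hμ0, hmin⟩ := hH.ellipt (Icc s T) hJI hJb p.2
      exact aux_minEig_psd hμ0 (hmin t ht x) ξ
    · -- symmetry
      exact fun p t x i j => hH.symm p.2 t x i j
    · -- off-diagonal nonneg
      intro t ht x p q hne
      rcases p with ⟨e, k⟩; rcases q with ⟨e', h⟩
      by_cases hkh : k = h
      · subst hkh
        have hee : e ≠ e' := fun hc => hne (by rw [hc])
        simp [CCdef, hee]
      · by_cases hee : e = e' <;>
          simp [CCdef, hkh, hee] <;>
          [linarith [neg_abs_le (c t x k h)]; linarith [le_abs_self (c t x k h)]]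
    · -- row sums
      intro t ht x p
      rcases p with ⟨e, k⟩
      have h1 := aux_CC_master c t x k e (fun _ => (1:ℝ)) (fun _ => (0:ℝ))
      have h2 : ∑ q : Bool × Fin m, CCdef c t x (e, k) q
          = ∑ q : Bool × Fin m, CCdef c t x (e, k) q * ((1:ℝ) - sgn q.1 * 0) := by
        exact Finset.sum_congr rfl fun q _ => by ring
      rw [h2, h1]
      have h3 : ∑ h, CP c t x k h * (1:ℝ) = ∑ h, CP c t x k h :=
        Finset.sum_congr rfl fun h _ => by ring
      simp only [mul_zero, Finset.sum_const_zero, sub_zero, h3]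
      simpa using hM t ht x k
    · -- φ regularity
      exact fun p => hφ2 p.2
    · exact fun x p => hφpos x p.2
    · exact fun p => hφinf p.2
    · -- Lyapunov for the doubled system
      intro t ht x p
      rcases p with ⟨e, k⟩
      have h1 := aux_CC_master c t x k e (fun h => φ x h) (fun _ => (0:ℝ))
      have h2 : ∑ q : Bool × Fin m, CCdef c t x (e, k) q * φ x q.2
          = ∑ q : Bool × Fin m, CCdef c t x (e, k) q * (φ x q.2 - sgn q.1 * 0) :=
        Finset.sum_congr rfl fun q _ => by ring
      have h4 := hφsup t ht x k
      rw [opA] at h4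
      simp only
      rw [h2, h1]
      simp only [mul_zero, Finset.sum_const_zero, sub_zero]
      linarith
    · -- continuity of W
      intro p
      have hc1 : ContinuousOn (fun q : ℝ × Euc d => uP q.1 q.2 p.2) (Icc s T ×ˢ univ) :=
        ((continuous_apply p.2).comp_continuousOn huP.1).mono
          (prod_mono_left Icc_subset_Ici_self)
      have hc2 : ContinuousOn (fun q : ℝ × Euc d => u q.1 q.2 p.2) (Icc s T ×ˢ univ) :=
        ((continuous_apply p.2).comp_continuousOn hu.1).mono
          (prod_mono_left Icc_subset_Ici_self)
      exact hc1.sub (continuousOn_const.mul hc2)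
    · -- spatial regularity of W
      intro t ht p
      exact (huP.2.2.1 t ht.1 p.2).sub (contDiff_const.mul (hu.2.2.1 t ht.1 p.2))
    · -- the equation for W
      intro t ht x p
      rcases p with ⟨e, k⟩
      have htI : t ∈ Ioi s := ht.1
      have hdP := huP.2.2.2 t htI x k
      have hdU := (hu.2.2.2 t htI x k).const_mul (sgn e)
      have hder := hdP.sub hdU
      -- rewrite the rate
      have hfun : (fun y => W t y (e, k))
          = fun y => (1:ℝ) * uP t y k + (-(sgn e)) * u t y k := by
        funext y; simp only [hW]; ring
      have hP2 : ContDiff ℝ 2 (fun x => uP t x k) := huP.2.2.1 t htI k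
      have hU2 : ContDiff ℝ 2 (fun x => u t x k) := hu.2.2.1 t htI k
      have hpd2W : ∀ i j, pd2 i j (fun y => W t y (e, k)) x
          = (1:ℝ) * pd2 i j (fun y => uP t y k) x
            + (-(sgn e)) * pd2 i j (fun y => u t y k) x := by
        intro i j
        rw [hfun]
        exact aux_pd2_combo hP2 hU2 1 (-(sgn e)) i j x
      have hpdW : ∀ j, pd j (fun y => W t y (e, k)) x
          = (1:ℝ) * pd j (fun y => uP t y k) x
            + (-(sgn e)) * pd j (fun y => u t y k) x := by
        intro j
        rw [hfun]
        exact aux_pd_combo (hP2.differentiable (by norm_num) x)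
          (hU2.differentiable (by norm_num) x) 1 (-(sgn e)) j
      have e2 : ∑ i, ∑ j, Q k t x i j * pd2 i j (fun y => W t y (e, k)) x
          = (1:ℝ) * (∑ i, ∑ j, Q k t x i j * pd2 i j (fun y => uP t y k) x)
            + (-(sgn e)) * (∑ i, ∑ j, Q k t x i j * pd2 i j (fun y => u t y k) x) := by
        rw [Finset.mul_sum, Finset.mul_sum, ← Finset.sum_add_distrib]
        refine Finset.sum_congr rfl fun i _ => ?_
        rw [← aux_sum_split]
        exact Finset.sum_congr rfl fun j _ => by rw [hpd2W i j]
      have e1 : ∑ j, b k t x j * pd j (fun y => W t y (e, k)) x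
          = (1:ℝ) * (∑ j, b k t x j * pd j (fun y => uP t y k) x)
            + (-(sgn e)) * (∑ j, b k t x j * pd j (fun y => u t y k) x) := by
        rw [← aux_sum_split]
        exact Finset.sum_congr rfl fun j _ => by rw [hpdW j]
      have e0 : ∑ q : Bool × Fin m, CCdef c t x (e, k) q * W t x q
          = (∑ h, CP c t x k h * uP t x h) - sgn e * ∑ h, c t x k h * u t x h := by
        have := aux_CC_master c t x k e (fun h => uP t x h) (fun h => u t x h)
        simpa [hW] using this
      have hrate : opA Q b (CP c) t (uP t) x k - sgn e * opA Q b c t (u t) x k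
          = (∑ i, ∑ j, Q k t x i j * pd2 i j (fun y => W t y (e, k)) x)
            + (∑ j, b k t x j * pd j (fun y => W t y (e, k)) x)
            + ∑ q : Bool × Fin m, CCdef c t x (e, k) q * W t x q := by
        rw [e2, e1, e0, opA, opA]
        ring
      rw [← hrate]
      exact hder
    · -- boundedness
      refine ⟨K2 + K1, fun t ht x p => ?_⟩
      have h1 := hK1 t ht x p.2
      have h2 := hK2 t ht x p.2
      have h3 : |W t x p| ≤ |uP t x p.2| + |sgn p.1 * u t x p.2| := by
        simp only [hW, sub_eq_add_neg]
        exact le_trans (abs_add_le _ _) (by rw [abs_neg])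
      have h4 : |sgn p.1 * u t x p.2| = |u t x p.2| := by
        rw [abs_mul]
        rcases p with ⟨e, k⟩
        cases e <;> simp [sgn]
      linarith [h3, h4 ▸ h3]
    · -- initial datum
      intro x p
      have h1 : uP s x = fun k => |f x k| := huP.2.1 x
      have h2 : u s x = f x := hu.2.1 x
      simp only [hW, h1, h2]
      rcases p with ⟨e, k⟩
      cases e <;> simp [sgn] <;>
        [linarith [neg_abs_le (f x k)]; linarith [le_abs_self (f x k)]]
  -- conclude
  intro k t ht x
  have hplus := key t ht x (true, k)
  have hminus := key t ht x (false, k)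
  simp only [hW, sgn] at hplus hminus
  norm_num at hplus hminus
  have huPnn : 0 ≤ uP t x k := by
    linarith [le_abs_self (u t x k), neg_abs_le (u t x k)]
  rw [abs_of_nonneg huPnn]
  exact abs_le.mpr ⟨by linarith, by linarith⟩
end
end

section
/- Assume Hypotheses (H) and (H'). Let (f_n) ⊂ C_b(ℝ^d;ℝ^m) be bounded in sup-norm and converge locally uniformly on ℝ^d to f ∈ C_b(ℝ^d;ℝ^m). For each t ∈ I and g ∈ C_b(ℝ^d;ℝ^m) let (T_t(τ)g)(x) := u(τ,x), where u is the unique classical solution, bounded on every strip, of D_τ u = 𝒜(t)u on (0,∞)×ℝ^d with u(0,·) = g (coefficients frozen at time t). Then the functions (t,τ,x) ↦ (T_t(τ)f_n)(x) converge, as n → ∞, to (t,τ,x) ↦ (T_t(τ)f)(x) locally uniformly on I×(0,∞)×ℝ^d. -/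
open Set Filter Metric MeasureTheory
open scoped BigOperators Topology

noncomputable section

variable {d m : ℕ}

/-- Hypotheses (H') relative to the bounded interval `[s,T] ⊆ I`. -/
def HypPrime (I : Set ℝ)
    (Q : Fin m → ℝ → Euc d → Fin d → Fin d → ℝ)
    (b : Fin m → ℝ → Euc d → Fin d → ℝ)
    (c : ℝ → Euc d → Fin m → Fin m → ℝ)
    (s T : ℝ) : Prop :=
  -- (i): third-order spatial regularity, with locally parabolic-Hölder derivatives
  (∃ α ∈ Ioo (0:ℝ) 1,
    (∀ k i j, (∀ t, ContDiff ℝ 3 (fun x => Q k t x i j)) ∧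
      ∀ n ≤ 3, LocParHolder α I
        (fun t x => iteratedFDeriv ℝ n (fun y => Q k t y i j) x)) ∧
    (∀ k j, (∀ t, ContDiff ℝ 3 (fun x => b k t x j)) ∧
      ∀ n ≤ 3, LocParHolder α I
        (fun t x => iteratedFDeriv ℝ n (fun y => b k t y j) x)) ∧
    (∀ k h, (∀ t, ContDiff ℝ 3 (fun x => c t x k h)) ∧
      ∀ n ≤ 3, LocParHolder α I
        (fun t x => iteratedFDeriv ℝ n (fun y => c t y k h) x))) ∧
  -- (ii) and (iv): dissipativity of the drift and bounds on the derivatives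
  (∃ r : Fin m → ℝ → Euc d → ℝ,
    (∀ k, ∀ t ∈ Icc s T, ∀ x : Euc d, ∀ ξ : Euc d,
      (∑ i, ∑ j, pd j (fun y => b k t y i) x * ξ j * ξ i) ≤ r k t x * ‖ξ‖ ^ 2) ∧
    (∃ b2 b3 : Fin m → ℝ → Euc d → ℝ, ∃ L B2 B3 MM : Fin m → ℝ,
      (∀ k t x, 0 < b2 k t x) ∧ (∀ k t x, 0 < b3 k t x) ∧
      (∀ k, 0 < L k) ∧ (∀ k, 0 < B2 k) ∧ (∀ k, 0 < B3 k) ∧ (∀ k, 0 < MM k) ∧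
      (∀ k j, ∀ t ∈ Ioc s T, ∀ x : Euc d,
        ‖iteratedFDeriv ℝ 2 (fun y => b k t y j) x‖ ≤ b2 k t x ∧
        ‖iteratedFDeriv ℝ 3 (fun y => b k t y j) x‖ ≤ b3 k t x) ∧
      (∀ k i j, ∀ t ∈ Ioc s T, ∀ x : Euc d, ∀ n, 1 ≤ n → n ≤ 3 →
        ‖iteratedFDeriv ℝ n (fun y => Q k t y i j) x‖ ≤ L k * minEig (Q k t x)) ∧
      (∀ k, ∀ t ∈ Ioc s T, ∀ x : Euc d,
        r k t x + B2 k * b2 k t x + B3 k * b3 k t x ≤ MM k * minEig (Q k t x)))) ∧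
  -- (iii): growth conditions
  (∃ C > (0:ℝ), ∀ k, ∀ t ∈ Icc s T, ∀ x : Euc d,
    (∀ i, |∑ j, Q k t x i j * x j| ≤ C * (1 + ‖x‖ ^ 2) * minEig (Q k t x)) ∧
    |∑ i, Q k t x i i| ≤ C * (1 + ‖x‖ ^ 2) * minEig (Q k t x) ∧
    (∑ j, b k t x j * x j) ≤ C * (1 + ‖x‖ ^ 2) * minEig (Q k t x)) ∧
  -- (v): bounds on the derivatives of the potential
  (∃ ch : Fin m → ℕ → ℝ → Euc d → ℝ, ∃ Cbar > (0:ℝ),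
    (∀ k n t x, 0 < ch k n t x) ∧
    (∀ k l, ∀ n, 1 ≤ n → n ≤ 3 → ∀ t ∈ Icc s T, ∀ x : Euc d,
      ‖iteratedFDeriv ℝ n (fun y => c t y k l) x‖ ≤ ch k n t x) ∧
    (∀ k, ∀ n, 1 ≤ n → n ≤ 3 → ∀ t ∈ Icc s T, ∀ x : Euc d,
      ch k n t x ≤ Cbar * (1 + |∑ j, CP c t x k j|)))

/-- `g ∈ C^k_b(ℝ^d;ℝ^m)` with all derivatives up to order `k` bounded by `B`. -/
def CkBound (k : ℕ) (g : Euc d → Fin m → ℝ) (B : ℝ) : Prop :=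
  ContDiff ℝ k g ∧ ∀ i ≤ k, ∀ x, ‖iteratedFDeriv ℝ i g x‖ ≤ B

/-- `g ∈ C^θ_b(ℝ^d;ℝ^m)` (`θ ≥ 0` real, possibly non-integer) with norm bounded by `B`:
derivatives up to order `⌊θ⌋` bounded by `B` and, if `θ` is not an integer, the
derivatives of order `⌊θ⌋` are globally `(θ-⌊θ⌋)`-Hölder with constant `B`. -/
def CthBound (θ : ℝ) (g : Euc d → Fin m → ℝ) (B : ℝ) : Prop :=
  ContDiff ℝ (⌊θ⌋₊) g ∧
  (∀ i ≤ ⌊θ⌋₊, ∀ x, ‖iteratedFDeriv ℝ i g x‖ ≤ B) ∧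
  (θ ≠ (⌊θ⌋₊ : ℝ) → ∀ x y : Euc d,
     ‖iteratedFDeriv ℝ (⌊θ⌋₊) g x - iteratedFDeriv ℝ (⌊θ⌋₊) g y‖ ≤
       B * ‖x - y‖ ^ (θ - (⌊θ⌋₊ : ℝ)))

/-- Classical solution of the autonomous Cauchy problem with the coefficients frozen
at time `tbar`. -/
def ClassicalSolFrozen (Q : Fin m → ℝ → Euc d → Fin d → Fin d → ℝ)
    (b : Fin m → ℝ → Euc d → Fin d → ℝ)
    (c : ℝ → Euc d → Fin m → Fin m → ℝ)
    (tbar : ℝ) (f : Euc d → Fin m → ℝ) (u : ℝ → Euc d → Fin m → ℝ) : Prop :=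
  ContinuousOn (fun p : ℝ × Euc d => u p.1 p.2) (Ici (0:ℝ) ×ˢ (univ : Set (Euc d))) ∧
  (∀ x, u 0 x = f x) ∧
  (∀ τ ∈ Ioi (0:ℝ), ∀ k, ContDiff ℝ 2 (fun x => u τ x k)) ∧
  (∀ τ ∈ Ioi (0:ℝ), ∀ x k, HasDerivAt (fun r => u r x k) (opA Q b c tbar (u τ) x k) τ)


namespace MPAux

variable {d m : ℕ}

lemma euc_eq_sum (x : Euc d) : x = ∑ i, x i • EuclideanSpace.single i (1:ℝ) := by
  ext j
  have : (∑ i, x i • EuclideanSpace.single i (1:ℝ)) j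
      = ∑ i, (x i • EuclideanSpace.single i (1:ℝ)) j := by
    rw [WithLp.ofLp_sum, Finset.sum_apply]
  rw [this]
  simp [EuclideanSpace.single_apply]

lemma abs_apply_le_norm (x : Euc d) (i : Fin d) : |x i| ≤ ‖x‖ := by
  rw [EuclideanSpace.norm_eq]
  have h1 : |x i| = Real.sqrt (‖x i‖ ^ 2) := by
    rw [Real.sqrt_sq_eq_abs]; simp
  rw [h1]
  apply Real.sqrt_le_sqrt
  exact Finset.single_le_sum (fun j _ => sq_nonneg ‖x j‖) (Finset.mem_univ i)

lemma contDiff_pd {f : Euc d → ℝ} (hf : ContDiff ℝ 2 f) (j : Fin d) :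
    ContDiff ℝ 1 (pd j f) := by
  have h1 : ContDiff ℝ 1 (fderiv ℝ f) := hf.fderiv_right (by norm_num)
  exact h1.clm_apply contDiff_const

lemma pd_comb {f g : Euc d → ℝ} (a c : ℝ) (hf : Differentiable ℝ f)
    (hg : Differentiable ℝ g) (j : Fin d) (x : Euc d) :
    pd j (fun y => a * f y - c * g y) x = a * pd j f x - c * pd j g x := by
  unfold pd
  rw [fderiv_fun_sub ((hf x).const_mul a) ((hg x).const_mul c),
    fderiv_const_mul (hf x), fderiv_const_mul (hg x)]
  simp

lemma pd2_comb {f g : Euc d → ℝ} (a c : ℝ) (hf : ContDiff ℝ 2 f)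
    (hg : ContDiff ℝ 2 g) (i j : Fin d) (x : Euc d) :
    pd2 i j (fun y => a * f y - c * g y) x = a * pd2 i j f x - c * pd2 i j g x := by
  unfold pd2
  have hrw : (fun y => pd j (fun z => a * f z - c * g z) y)
      = fun y => a * pd j f y - c * pd j g y := by
    funext y
    exact pd_comb a c (hf.differentiable (by norm_num))
      (hg.differentiable (by norm_num)) j y
  rw [hrw]
  have hdf : DifferentiableAt ℝ (pd j f) x :=
    ((contDiff_pd hf j).differentiable one_ne_zero) x
  have hdg : DifferentiableAt ℝ (pd j g) x :=
    ((contDiff_pd hg j).differentiable one_ne_zero) x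
  rw [fderiv_fun_sub (hdf.const_mul a) (hdg.const_mul c),
    fderiv_const_mul hdf, fderiv_const_mul hdg]
  simp

lemma opA_sub {Q : Fin m → ℝ → Euc d → Fin d → Fin d → ℝ}
    {b : Fin m → ℝ → Euc d → Fin d → ℝ}
    {c : ℝ → Euc d → Fin m → Fin m → ℝ} {t : ℝ}
    {z1 z2 : Euc d → Fin m → ℝ}
    (h1 : ∀ k, ContDiff ℝ 2 (fun x => z1 x k))
    (h2 : ∀ k, ContDiff ℝ 2 (fun x => z2 x k)) (x : Euc d) (k : Fin m) :
    opA Q b c t (fun y kk => z1 y kk - z2 y kk) x k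
      = opA Q b c t z1 x k - opA Q b c t z2 x k := by
  unfold opA
  have e2 : ∀ i j, pd2 i j (fun y => z1 y k - z2 y k) x
      = pd2 i j (fun y => z1 y k) x - pd2 i j (fun y => z2 y k) x := by
    intro i j
    have := pd2_comb (1:ℝ) (1:ℝ) (h1 k) (h2 k) i j x
    simpa using this
  have e1 : ∀ j, pd j (fun y => z1 y k - z2 y k) x
      = pd j (fun y => z1 y k) x - pd j (fun y => z2 y k) x := by
    intro j
    have := pd_comb (1:ℝ) (1:ℝ) ((h1 k).differentiable (by norm_num))
      ((h2 k).differentiable (by norm_num)) j x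
    simpa using this
  simp only [e2, e1]
  rw [Finset.sum_congr rfl (fun i _ => Finset.sum_congr rfl
    (fun j _ => mul_sub (Q k t x i j) _ _))]
  simp only [mul_sub, Finset.sum_sub_distrib]
  ring


/-- 1-d second derivative test at an (interior, here global) maximum. -/
lemma second_deriv_test_max (g g' : ℝ → ℝ) (B : ℝ)
    (hg : ∀ s, HasDerivAt g (g' s) s) (hg' : HasDerivAt g' B 0)
    (h0 : g' 0 = 0) (hmax : ∀ s, g s ≤ g 0) : B ≤ 0 := by
  by_contra hB
  push_neg at hB
  have hs := hasDerivAt_iff_tendsto_slope.1 hg'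
  have hev : ∀ᶠ s in 𝓝[≠] (0:ℝ), B/2 < slope g' 0 s :=
    hs.eventually (eventually_gt_nhds (by linarith))
  rw [eventually_nhdsWithin_iff] at hev
  rcases Metric.eventually_nhds_iff.1 hev with ⟨a, ha, hball⟩
  have hpos : ∀ s ∈ Ioo (0:ℝ) a, 0 < g' s := by
    intro s hs'
    have hne : s ∈ ({(0:ℝ)}ᶜ : Set ℝ) := by
      simp [ne_of_gt hs'.1]
    have := hball (by
      rw [Real.dist_eq, sub_zero, abs_of_pos hs'.1]
      exact hs'.2) hne
    have hslope : slope g' 0 s = g' s / s := by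
      simp [slope_def_field, h0]
    rw [hslope] at this
    have h2 : 0 < g' s / s := lt_trans (by linarith) this
    rcases div_pos_iff.1 h2 with h | h
    · exact h.1
    · linarith [hs'.1, h.2]
  have hmono : StrictMonoOn g (Icc 0 (a/2)) := by
    apply strictMonoOn_of_deriv_pos (convex_Icc _ _)
    · exact fun x _ => ((hg x).differentiableAt).continuousAt.continuousWithinAt
    · intro x hx
      rw [interior_Icc] at hx
      rw [(hg x).deriv]
      exact hpos x ⟨hx.1, lt_of_lt_of_le hx.2 (by linarith)⟩
  have : g 0 < g (a/2) := hmono (by constructor <;> linarith)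
    (by constructor <;> linarith) (by linarith)
  exact absurd (hmax (a/2)) (not_le.2 this)

lemma hasDerivAt_line (ψ : Euc d → ℝ) (hψ : ContDiff ℝ 2 ψ) (x0 u : Euc d) (s : ℝ) :
    HasDerivAt (fun r => ψ (x0 + r • u)) ((fderiv ℝ ψ (x0 + s • u)) u) s := by
  have h1 : HasDerivAt (fun r : ℝ => x0 + r • u) u s := by
    simpa using ((hasDerivAt_id s).smul_const u).const_add x0
  exact ((hψ.differentiable (by norm_num)) _).hasFDerivAt.comp_hasDerivAt s h1

lemma hasDerivAt_line2 (ψ : Euc d → ℝ) (hψ : ContDiff ℝ 2 ψ) (x0 u : Euc d) :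
    HasDerivAt (fun s : ℝ => (fderiv ℝ ψ (x0 + s • u)) u)
      ((fderiv ℝ (fderiv ℝ ψ) x0 u) u) (0:ℝ) := by
  have h1 : HasDerivAt (fun r : ℝ => x0 + r • u) u 0 := by
    simpa using ((hasDerivAt_id (0:ℝ)).smul_const u).const_add x0
  have hF : ContDiff ℝ 1 (fderiv ℝ ψ) := hψ.fderiv_right (by norm_num)
  have hx : x0 + (0:ℝ) • u = x0 := by simp
  have hfd : HasFDerivAt (fderiv ℝ ψ) (fderiv ℝ (fderiv ℝ ψ) x0)
      ((fun r : ℝ => x0 + r • u) 0) := by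
    simp only [hx]
    exact ((hF.differentiable one_ne_zero) x0).hasFDerivAt
  have h2 : HasDerivAt (fun s : ℝ => fderiv ℝ ψ (x0 + s • u))
      (fderiv ℝ (fderiv ℝ ψ) x0 u) 0 := hfd.comp_hasDerivAt 0 h1
  have h3 := (ContinuousLinearMap.apply ℝ ℝ u).hasFDerivAt.comp_hasDerivAt 0 h2
  exact h3

lemma pd2_eq_fderiv2 (ψ : Euc d → ℝ) (hψ : ContDiff ℝ 2 ψ) (i j : Fin d) (x : Euc d) :
    pd2 i j ψ x = (fderiv ℝ (fderiv ℝ ψ) x (EuclideanSpace.single i 1))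
      (EuclideanSpace.single j 1) := by
  unfold pd2 pd
  have hF : ContDiff ℝ 1 (fderiv ℝ ψ) := hψ.fderiv_right (by norm_num)
  rw [fderiv_clm_apply ((hF.differentiable one_ne_zero) x) (differentiableAt_const _)]
  simp

lemma dir_second_le_zero (ψ : Euc d → ℝ) (hψ : ContDiff ℝ 2 ψ) (x0 : Euc d)
    (hmax : ∀ y, ψ y ≤ ψ x0) (u : Euc d) :
    ∑ i, ∑ j, u i * u j * pd2 i j ψ x0 ≤ 0 := by
  have hmax' : IsMaxOn ψ univ x0 := by
    intro y _
    exact hmax y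
  have hfd0 : fderiv ℝ ψ x0 = 0 :=
    IsLocalMax.fderiv_eq_zero (hmax'.isLocalMax univ_mem)
  have key : (fderiv ℝ (fderiv ℝ ψ) x0 u) u
      = ∑ i, ∑ j, u i * u j * pd2 i j ψ x0 := by
    have h1 : fderiv ℝ (fderiv ℝ ψ) x0 u
        = ∑ i, u i • fderiv ℝ (fderiv ℝ ψ) x0 (EuclideanSpace.single i 1) := by
      conv_lhs => rw [euc_eq_sum (d := d) u]
      rw [map_sum]
      exact Finset.sum_congr rfl (fun i _ => by rw [_root_.map_smul])
    rw [h1, ContinuousLinearMap.sum_apply]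
    apply Finset.sum_congr rfl
    intro i _
    rw [ContinuousLinearMap.smul_apply, smul_eq_mul]
    have h2 : (fderiv ℝ (fderiv ℝ ψ) x0 (EuclideanSpace.single i 1)) u
        = ∑ j, u j * pd2 i j ψ x0 := by
      conv_lhs => rw [euc_eq_sum (d := d) u]
      rw [map_sum]
      apply Finset.sum_congr rfl
      intro j _
      rw [_root_.map_smul, smul_eq_mul, pd2_eq_fderiv2 ψ hψ i j x0]
    rw [h2, Finset.mul_sum]
    exact Finset.sum_congr rfl (fun j _ => by ring)
  rw [← key]
  apply second_deriv_test_max (fun s => ψ (x0 + s • u))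
    (fun s => (fderiv ℝ ψ (x0 + s • u)) u) _
    (hasDerivAt_line ψ hψ x0 u) (hasDerivAt_line2 ψ hψ x0 u)
  · simp [hfd0]
  · intro s
    simpa using hmax (x0 + s • u)


lemma euc_sum_apply {ι : Type*} (s : Finset ι) (v : ι → Euc d) (i : Fin d) :
    (∑ l ∈ s, v l) i = ∑ l ∈ s, v l i :=
  by rw [WithLp.ofLp_sum, Finset.sum_apply]

lemma minEig_le_rayleigh (A : Fin d → Fin d → ℝ) (ξ : Euc d) (hξ : ‖ξ‖ = 1) :
    minEig A ≤ ∑ i, ∑ j, A i j * ξ i * ξ j := by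
  apply csInf_le
  · refine ⟨-(∑ i, ∑ j, |A i j|), ?_⟩
    rintro r ⟨ζ, hζ, rfl⟩
    have key : ∀ i j : Fin d, -|A i j| ≤ A i j * ζ i * ζ j := by
      intro i j
      have hi := abs_apply_le_norm ζ i
      have hj := abs_apply_le_norm ζ j
      rw [hζ] at hi hj
      have h1 : |A i j * ζ i * ζ j| ≤ |A i j| := by
        rw [abs_mul, abs_mul, mul_assoc]
        have hp : |ζ i| * |ζ j| ≤ 1 :=
          mul_le_one₀ hi (abs_nonneg (ζ j)) hj
        calc |A i j| * (|ζ i| * |ζ j|) ≤ |A i j| * 1 :=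
              mul_le_mul_of_nonneg_left hp (abs_nonneg _)
          _ = |A i j| := mul_one _
      linarith [neg_abs_le (A i j * ζ i * ζ j)]
    calc -(∑ i, ∑ j, |A i j|) = ∑ i, ∑ j, -|A i j| := by
          rw [← Finset.sum_neg_distrib]
          exact Finset.sum_congr rfl (fun i _ => by rw [← Finset.sum_neg_distrib])
      _ ≤ ∑ i, ∑ j, A i j * ζ i * ζ j :=
          Finset.sum_le_sum (fun i _ => Finset.sum_le_sum (fun j _ => key i j))
  · exact ⟨ξ, hξ, rfl⟩

lemma form_nonneg_of_minEig (A : Fin d → Fin d → ℝ) (μ0 : ℝ) (hμ0 : 0 < μ0)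
    (hmin : μ0 ≤ minEig A) (ξ : Euc d) : 0 ≤ ∑ i, ∑ j, A i j * ξ i * ξ j := by
  by_cases hξ : ξ = 0
  · subst hξ
    have : ∀ i j : Fin d, A i j * (0:Euc d) i * (0:Euc d) j = 0 := by
      intro i j
      have : (0:Euc d) i = 0 := rfl
      rw [this, mul_zero, zero_mul]
    simp [this]
  · have hn : 0 < ‖ξ‖ := norm_pos_iff.2 hξ
    set w : Euc d := ‖ξ‖⁻¹ • ξ with hw
    have hw1 : ‖w‖ = 1 := norm_smul_inv_norm hξ
    have h1 : μ0 ≤ ∑ i, ∑ j, A i j * w i * w j :=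
      le_trans hmin (minEig_le_rayleigh A w hw1)
    have hwi : ∀ i, w i = ‖ξ‖⁻¹ * ξ i := fun i => rfl
    have hexp : ∑ i, ∑ j, A i j * w i * w j
        = (‖ξ‖⁻¹)^2 * ∑ i, ∑ j, A i j * ξ i * ξ j := by
      rw [Finset.mul_sum]
      apply Finset.sum_congr rfl
      intro i _
      rw [Finset.mul_sum]
      apply Finset.sum_congr rfl
      intro j _
      rw [hwi i, hwi j]
      ring
    rw [hexp] at h1
    nlinarith [sq_nonneg ‖ξ‖⁻¹]

lemma trace_pd2_nonpos (A : Fin d → Fin d → ℝ) (hsym : ∀ i j, A i j = A j i)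
    (hpos : ∀ ξ : Euc d, 0 ≤ ∑ i, ∑ j, A i j * ξ i * ξ j)
    (ψ : Euc d → ℝ) (hψ : ContDiff ℝ 2 ψ) (x0 : Euc d) (hmax : ∀ y, ψ y ≤ ψ x0) :
    ∑ i, ∑ j, A i j * pd2 i j ψ x0 ≤ 0 := by
  classical
  set T := Matrix.toEuclideanLin (𝕜 := ℝ) (Matrix.of A) with hT
  have hTapp : ∀ (x : Euc d) (i : Fin d), T x i = ∑ j, A i j * x j := by
    intro x i
    rw [hT, Matrix.toEuclideanLin_apply]
    simp [Matrix.mulVec, dotProduct]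
  have hinner : ∀ x y : Euc d, (inner ℝ x y : ℝ) = ∑ i, x i * y i := by
    intro x y
    simp [PiLp.inner_apply, RCLike.inner_apply, mul_comm]
  have hTsym : T.IsSymmetric := by
    intro x y
    rw [hinner, hinner]
    have l1 : ∑ i, T x i * y i = ∑ i, ∑ j, A i j * x j * y i :=
      Finset.sum_congr rfl (fun i _ => by rw [hTapp, Finset.sum_mul])
    have l2 : ∑ i, x i * T y i = ∑ i, ∑ j, A i j * y j * x i :=
      Finset.sum_congr rfl (fun i _ => by
        rw [hTapp, Finset.mul_sum]
        exact Finset.sum_congr rfl (fun j _ => by ring))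
    rw [l1, l2, Finset.sum_comm]
    apply Finset.sum_congr rfl
    intro a _
    apply Finset.sum_congr rfl
    intro bb _
    rw [hsym bb a]
    ring
  set u := hTsym.eigenvectorBasis finrank_euclideanSpace_fin with hu
  set μ := hTsym.eigenvalues finrank_euclideanSpace_fin with hμ
  have happly : ∀ l, T (u l) = μ l • u l := by
    intro l
    have := hTsym.apply_eigenvectorBasis finrank_euclideanSpace_fin l
    exact this
  have hformT : ∀ x : Euc d, (inner ℝ (T x) x : ℝ) = ∑ i, ∑ j, A i j * x i * x j := by
    intro x
    rw [hinner]
    have l1 : ∑ i, T x i * x i = ∑ i, ∑ j, A i j * x j * x i :=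
      Finset.sum_congr rfl (fun i _ => by rw [hTapp, Finset.sum_mul])
    rw [l1, Finset.sum_comm]
    apply Finset.sum_congr rfl
    intro a _
    apply Finset.sum_congr rfl
    intro bb _
    rw [hsym bb a]
  have hμnn : ∀ l, 0 ≤ μ l := by
    intro l
    have hnorm : ‖u l‖ = 1 := u.orthonormal.1 l
    have h1 : (inner ℝ (T (u l)) (u l) : ℝ) = μ l := by
      rw [happly l, real_inner_smul_left, real_inner_self_eq_norm_sq, hnorm]
      ring
    have h2 := hpos (u l)
    rw [← hformT (u l)] at h2
    linarith [h1 ▸ h2]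
  have h1 : ∀ i j, T (EuclideanSpace.single j (1:ℝ)) i = A i j := by
    intro i j
    rw [hTapp]
    simp [EuclideanSpace.single_apply]
  have hrepr : ∀ (x : Euc d), T x = ∑ l, (inner ℝ (u l) x : ℝ) • (μ l • u l) := by
    intro x
    conv_lhs => rw [← u.sum_repr x]
    rw [map_sum]
    apply Finset.sum_congr rfl
    intro l _
    rw [_root_.map_smul, happly l, u.repr_apply_apply]
  have hAij : ∀ i j, A i j = ∑ l, μ l * u l j * u l i := by
    intro i j
    rw [← h1 i j, hrepr, euc_sum_apply]
    apply Finset.sum_congr rfl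
    intro l _
    have hin : (inner ℝ (u l) (EuclideanSpace.single j (1:ℝ)) : ℝ) = u l j := by
      rw [hinner]
      simp [EuclideanSpace.single_apply]
    rw [hin]
    have : ((u l j • (μ l • u l)) : Euc d) i = u l j * (μ l * u l i) := rfl
    rw [this]
    ring
  calc ∑ i, ∑ j, A i j * pd2 i j ψ x0
      = ∑ l, μ l * (∑ i, ∑ j, u l i * u l j * pd2 i j ψ x0) := by
        rw [Finset.sum_congr rfl (fun i (_ : i ∈ Finset.univ) => Finset.sum_congr rfl
          (fun j (_ : j ∈ Finset.univ) => by rw [hAij i j, Finset.sum_mul]))]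
        rw [Finset.sum_congr rfl
          (fun i (_ : i ∈ Finset.univ) => Finset.sum_comm)]
        rw [Finset.sum_comm]
        apply Finset.sum_congr rfl
        intro l _
        rw [Finset.mul_sum]
        apply Finset.sum_congr rfl
        intro i _
        rw [Finset.mul_sum]
        apply Finset.sum_congr rfl
        intro j _
        ring
    _ ≤ 0 := Finset.sum_nonpos (fun l _ => mul_nonpos_iff.2
        (Or.inl ⟨hμnn l, dir_second_le_zero ψ hψ x0 hmax (u l)⟩))


lemma deriv_nonneg_of_le_zero (h : ℝ → ℝ) (h' τ0 : ℝ) (hτ0 : 0 < τ0)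
    (hd : HasDerivAt h h' τ0) (hzero : h τ0 = 0)
    (hle : ∀ τ ∈ Ico 0 τ0, h τ ≤ 0) : 0 ≤ h' := by
  have hs := hasDerivAt_iff_tendsto_slope.1 hd
  have hne : (𝓝[Ico (0:ℝ) τ0] τ0).NeBot := by
    rw [← mem_closure_iff_nhdsWithin_neBot, closure_Ico (ne_of_lt hτ0)]
    exact ⟨le_of_lt hτ0, le_refl τ0⟩
  have hmono : 𝓝[Ico (0:ℝ) τ0] τ0 ≤ 𝓝[≠] τ0 :=
    nhdsWithin_mono _ (fun τ hτ => ne_of_lt hτ.2)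
  apply ge_of_tendsto (hs.mono_left hmono)
  apply eventually_nhdsWithin_of_forall
  intro τ hτ
  rw [slope_def_field, hzero, sub_zero]
  have h1 : 0 ≤ (-(h τ)) / (-(τ - τ0)) :=
    div_nonneg (by linarith [hle τ hτ]) (by linarith [hτ.2])
  rwa [neg_div_neg_eq] at h1

/-- Parabolic maximum principle estimate for the system with coefficients frozen
at time `tb`. -/
lemma max_principle
    (Q : Fin m → ℝ → Euc d → Fin d → Fin d → ℝ)
    (b : Fin m → ℝ → Euc d → Fin d → ℝ)
    (c : ℝ → Euc d → Fin m → Fin m → ℝ) (tb : ℝ)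
    (hQsym : ∀ k (x : Euc d) i j, Q k tb x i j = Q k tb x j i)
    (hQpos : ∀ k (x ξ : Euc d), 0 ≤ ∑ i, ∑ j, Q k tb x i j * ξ i * ξ j)
    (φ : Euc d → Fin m → ℝ) (lam : ℝ) (hlam : 0 < lam)
    (hφC2 : ∀ k, ContDiff ℝ 2 (fun x => φ x k))
    (hφpos : ∀ x k, 0 < φ x k)
    (hφcoc : ∀ k, Tendsto (fun x => φ x k) (cocompact (Euc d)) atTop)
    (hφlyap : ∀ x k, opA Q b (CP c) tb φ x k ≤ lam * φ x k)
    (M : ℝ) (hM : ∀ (x : Euc d) k, (∑ j, CP c tb x k j) ≤ M)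
    (v : ℝ → Euc d → Fin m → ℝ)
    (hvc : ContinuousOn (fun p : ℝ × Euc d => v p.1 p.2) (Ici (0:ℝ) ×ˢ univ))
    (hvC2 : ∀ τ ∈ Ioi (0:ℝ), ∀ k, ContDiff ℝ 2 (fun x => v τ x k))
    (hvde : ∀ τ ∈ Ioi (0:ℝ), ∀ (x : Euc d) k,
      HasDerivAt (fun r => v r x k) (opA Q b c tb (v τ) x k) τ)
    (T : ℝ) (hT : 0 < T) (Ks : ℝ)
    (hKs : ∀ τ ∈ Icc (0:ℝ) T, ∀ (x : Euc d) k, |v τ x k| ≤ Ks)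
    (η δ ε : ℝ) (hη : 0 ≤ η) (hδ : 0 < δ) (hε : 0 < ε)
    (hinit : ∀ (x : Euc d) k, |v 0 x k| ≤ η + ε * φ x k) :
    ∀ τ ∈ Icc (0:ℝ) T, ∀ (x : Euc d) k,
      |v τ x k| ≤ Real.exp ((max lam M + 1) * τ) * (η + δ + ε * φ x k) := by
  classical
  set M' : ℝ := max lam M + 1 with hM'def
  have hM'lam : lam < M' := by
    have := le_max_left lam M
    simp only [hM'def]; linarith
  have hM'M : M < M' := by
    have := le_max_right lam M
    simp only [hM'def]; linarith
  have hM'pos : 0 < M' := lt_trans hlam hM'lam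
  by_contra hcon
  push_neg at hcon
  obtain ⟨τ1, hτ1, x1, k1, hbad⟩ := hcon
  -- the barrier
  set bar : ℝ × Euc d → Fin m → ℝ :=
    fun p k => Real.exp (M' * p.1) * (η + δ + ε * φ p.2 k) with hbardef
  have hbarpos : ∀ p k, 0 < bar p k := by
    intro p k
    apply mul_pos (Real.exp_pos _)
    have := hφpos p.2 k
    nlinarith
  set S0 : Set (ℝ × Euc d) := Icc (0:ℝ) T ×ˢ (univ : Set (Euc d)) with hS0def
  set A : Set (ℝ × Euc d) := ⋃ k : Fin m,
    ({p ∈ S0 | bar p k ≤ v p.1 p.2 k} ∪ {p ∈ S0 | bar p k ≤ -(v p.1 p.2 k)}) with hAdef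
  -- A is nonempty
  have hAne : A.Nonempty := by
    refine ⟨(τ1, x1), ?_⟩
    rw [hAdef, mem_iUnion]
    refine ⟨k1, ?_⟩
    have hmem : (τ1, x1) ∈ S0 := by
      rw [hS0def]; exact ⟨hτ1, mem_univ _⟩
    have hbeq : bar (τ1, x1) k1 = Real.exp (M' * τ1) * (η + δ + ε * φ x1 k1) := rfl
    rcases abs_cases (v τ1 x1 k1) with ⟨he, _⟩ | ⟨he, _⟩
    · exact Or.inl ⟨hmem, by rw [hbeq]; rw [he] at hbad; linarith⟩
    · exact Or.inr ⟨hmem, by rw [hbeq]; rw [he] at hbad; linarith⟩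
  -- continuity facts
  have hφc : ∀ k, Continuous (fun y : Euc d => φ y k) := fun k => (hφC2 k).continuous
  have hvcont : ∀ k, ContinuousOn (fun p : ℝ × Euc d => v p.1 p.2 k) S0 := by
    intro k
    have hsub : S0 ⊆ Ici (0:ℝ) ×ˢ (univ : Set (Euc d)) := by
      rw [hS0def]
      exact prod_mono (Icc_subset_Ici_self) (subset_refl _)
    exact (continuous_apply k).comp_continuousOn (hvc.mono hsub)
  have hbarcont : ∀ k, Continuous (fun p : ℝ × Euc d => bar p k) := by
    intro k
    rw [hbardef]
    exact (Real.continuous_exp.comp (continuous_const.mul continuous_fst)).mul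
      (continuous_const.add (continuous_const.mul ((hφc k).comp continuous_snd)))
  have hS0closed : IsClosed S0 := by
    rw [hS0def]; exact isClosed_Icc.prod isClosed_univ
  -- A is contained in a compact strip
  have hKsnn : 0 ≤ Ks := le_trans (abs_nonneg _) (hKs 0 ⟨le_refl _, le_of_lt hT⟩ x1 k1)
  have hCk : ∀ k : Fin m, ∃ C : Set (Euc d), IsCompact C ∧
      ∀ y ∉ C, Ks / ε + 1 ≤ φ y k := by
    intro k
    have hev : ∀ᶠ y in cocompact (Euc d), Ks / ε + 1 ≤ φ y k :=
      (hφcoc k).eventually (eventually_ge_atTop _)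
    obtain ⟨C, hCc, hCsub⟩ := mem_cocompact.mp hev
    exact ⟨C, hCc, fun y hy => hCsub hy⟩
  choose Cs hCsc hCsge using hCk
  obtain ⟨R1, hR1⟩ := (isCompact_iUnion hCsc).isBounded.subset_closedBall 0
  set S1 : Set (ℝ × Euc d) := Icc (0:ℝ) T ×ˢ closedBall (0:Euc d) R1 with hS1def
  have hS1comp : IsCompact S1 := (isCompact_Icc).prod (isCompact_closedBall _ _)
  have hAsub : A ⊆ S1 := by
    rw [hAdef]
    intro p hp
    rw [mem_iUnion] at hp
    obtain ⟨k, hk⟩ := hp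
    have hkey : p ∈ S0 ∧ bar p k ≤ |v p.1 p.2 k| := by
      rcases hk with ⟨hm, hle⟩ | ⟨hm, hle⟩
      · exact ⟨hm, le_trans hle (le_abs_self _)⟩
      · exact ⟨hm, le_trans hle (neg_le_abs _)⟩
    obtain ⟨hmS0, hle⟩ := hkey
    have hpIcc : p.1 ∈ Icc (0:ℝ) T := by
      rw [hS0def] at hmS0; exact hmS0.1
    have hKb : |v p.1 p.2 k| ≤ Ks := hKs p.1 hpIcc p.2 k
    have hexp1 : (1:ℝ) ≤ Real.exp (M' * p.1) := by
      apply Real.one_le_exp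
      exact mul_nonneg (le_of_lt hM'pos) hpIcc.1
    have hφb : φ p.2 k ≤ Ks / ε := by
      have h1 : ε * φ p.2 k ≤ Ks := by
        have h2 : ε * φ p.2 k ≤ bar p k := by
          have hb : bar p k = Real.exp (M' * p.1) * (η + δ + ε * φ p.2 k) := rfl
          have hεφ : 0 < ε * φ p.2 k := mul_pos hε (hφpos p.2 k)
          have h3 : ε * φ p.2 k ≤ Real.exp (M' * p.1) * (ε * φ p.2 k) :=
            le_mul_of_one_le_left (le_of_lt hεφ) hexp1
          have h4 : Real.exp (M' * p.1) * (ε * φ p.2 k)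
              ≤ Real.exp (M' * p.1) * (η + δ + ε * φ p.2 k) :=
            mul_le_mul_of_nonneg_left (by linarith) (by positivity)
          rw [hb]
          linarith
        linarith [le_trans h2 (le_trans hle hKb)]
      rw [le_div_iff₀ hε]
      linarith
    have hpC : p.2 ∈ Cs k := by
      by_contra hnot
      have := hCsge k p.2 hnot
      linarith
    rw [hS1def]
    refine ⟨hpIcc, hR1 (mem_iUnion.2 ⟨k, hpC⟩)⟩
  -- A is compact
  have hAclosed : IsClosed A := by
    rw [hAdef]
    apply isClosed_iUnion_of_finite
    intro k
    apply IsClosed.union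
    · have hco := (hvcont k).sub (hbarcont k).continuousOn
      have h2 := hco.preimage_isClosed_of_isClosed hS0closed (isClosed_Ici (a := (0:ℝ)))
      have h3 : {p | p ∈ S0 ∧ bar p k ≤ v p.1 p.2 k}
          = S0 ∩ (fun p : ℝ × Euc d => v p.1 p.2 k - bar p k) ⁻¹' (Ici 0) := by
        ext p
        simp only [mem_inter_iff, mem_preimage, mem_Ici, mem_setOf_eq, sub_nonneg]
      rw [h3]
      exact h2
    · have hco := ((hvcont k).neg).sub (hbarcont k).continuousOn
      have h2 := hco.preimage_isClosed_of_isClosed hS0closed (isClosed_Ici (a := (0:ℝ)))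
      have h3 : {p | p ∈ S0 ∧ bar p k ≤ -v p.1 p.2 k}
          = S0 ∩ (fun p : ℝ × Euc d => -v p.1 p.2 k - bar p k) ⁻¹' (Ici 0) := by
        ext p
        simp only [mem_inter_iff, mem_preimage, mem_Ici, mem_setOf_eq, sub_nonneg]
      rw [h3]
      exact h2
  have hAcomp : IsCompact A := hS1comp.of_isClosed_subset hAclosed hAsub
  -- take the minimal time
  obtain ⟨p0, hp0A, hp0min⟩ :=
    hAcomp.exists_isMinOn hAne (continuous_fst.continuousOn)
  set τ0 : ℝ := p0.1 with hτ0def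
  set x0 : Euc d := p0.2 with hx0def
  have hp0S0 : p0 ∈ S0 := by
    rw [hAdef] at hp0A
    rw [mem_iUnion] at hp0A
    obtain ⟨k, hk⟩ := hp0A
    rcases hk with ⟨hm, _⟩ | ⟨hm, _⟩ <;> exact hm
  have hτ0Icc : τ0 ∈ Icc (0:ℝ) T := by
    rw [hS0def] at hp0S0; exact hp0S0.1
  -- a witness component and sign
  obtain ⟨k0, σ0, hσ0, hW0⟩ : ∃ (k0 : Fin m) (σ0 : ℝ), (σ0 = 1 ∨ σ0 = -1) ∧
      bar p0 k0 ≤ σ0 * v τ0 x0 k0 := by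
    rw [hAdef] at hp0A
    rw [mem_iUnion] at hp0A
    obtain ⟨k, hk⟩ := hp0A
    rcases hk with ⟨_, hle⟩ | ⟨_, hle⟩
    · exact ⟨k, 1, Or.inl rfl, by rw [hτ0def, hx0def]; linarith⟩
    · exact ⟨k, -1, Or.inr rfl, by rw [hτ0def, hx0def]; linarith⟩
  have hσabs : ∀ a : ℝ, σ0 * a ≤ |a| := by
    intro a
    rcases hσ0 with h | h
    · rw [h, one_mul]; exact le_abs_self a
    · rw [h, neg_one_mul]; exact neg_le_abs a
  -- τ0 > 0
  have hτ0pos : 0 < τ0 := by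
    rcases lt_or_eq_of_le hτ0Icc.1 with h | h
    · exact h
    · exfalso
      have h0 : bar p0 k0 = η + δ + ε * φ x0 k0 := by
        have hb : bar p0 k0 = Real.exp (M' * τ0) * (η + δ + ε * φ x0 k0) := rfl
        rw [hb, ← h, mul_zero, Real.exp_zero, one_mul]
      have h1 : σ0 * v τ0 x0 k0 ≤ |v τ0 x0 k0| := hσabs _
      have h2 := hinit x0 k0
      have h3 : |v τ0 x0 k0| ≤ η + ε * φ x0 k0 := by rw [← h]; exact h2
      linarith [hW0, h0, h1, h3, hδ]
  -- before time τ0 everything is strictly below the barrier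
  have hbefore : ∀ τ ∈ Ico (0:ℝ) τ0, ∀ (x : Euc d) k (σ : ℝ), (σ = 1 ∨ σ = -1) →
      σ * v τ x k < bar (τ, x) k := by
    intro τ hτ x k σ hσ
    by_contra hnot
    push_neg at hnot
    have hmem : (τ, x) ∈ A := by
      rw [hAdef, mem_iUnion]
      refine ⟨k, ?_⟩
      have hS : (τ, x) ∈ S0 := by
        rw [hS0def]
        exact ⟨⟨hτ.1, le_trans (le_of_lt hτ.2) hτ0Icc.2⟩, mem_univ _⟩
      rcases hσ with h | h
      · exact Or.inl ⟨hS, by rw [h] at hnot; linarith⟩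
      · exact Or.inr ⟨hS, by rw [h] at hnot; linarith⟩
    have := hp0min hmem
    simp only [hτ0def] at this
    exact absurd this (by simp; linarith [hτ.2])
  -- at time τ0, everything is (weakly) below the barrier
  have hattime : ∀ (x : Euc d) k (σ : ℝ), (σ = 1 ∨ σ = -1) →
      σ * v τ0 x k ≤ bar (τ0, x) k := by
    intro x k σ hσ
    set g : ℝ → ℝ := fun τ => σ * v τ x k - bar (τ, x) k with hgdef
    have hgc : ContinuousOn g (Icc (0:ℝ) T) := by
      have hc2 : Continuous (fun τ : ℝ => ((τ, x) : ℝ × Euc d)) :=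
        continuous_id.prodMk continuous_const
      have hvx : ContinuousOn (fun τ : ℝ => v τ x k) (Icc (0:ℝ) T) :=
        (hvcont k).comp hc2.continuousOn
          (fun τ hτ => by rw [hS0def]; exact mem_prod.2 ⟨hτ, mem_univ _⟩)
      have hbx : Continuous (fun τ : ℝ => bar (τ, x) k) := (hbarcont k).comp hc2
      exact (continuousOn_const.mul hvx).sub hbx.continuousOn
    have hne : (𝓝[Ico (0:ℝ) τ0] τ0).NeBot := by
      rw [← mem_closure_iff_nhdsWithin_neBot, closure_Ico (ne_of_lt hτ0pos)]
      exact ⟨le_of_lt hτ0pos, le_refl τ0⟩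
    have htt : Tendsto g (𝓝[Ico (0:ℝ) τ0] τ0) (𝓝 (g τ0)) := by
      have h1 : ContinuousWithinAt g (Icc (0:ℝ) T) τ0 := hgc τ0 hτ0Icc
      exact h1.mono_left (nhdsWithin_mono _ (fun τ hτ =>
        ⟨hτ.1, le_trans (le_of_lt hτ.2) hτ0Icc.2⟩))
    have hev : ∀ᶠ τ in 𝓝[Ico (0:ℝ) τ0] τ0, g τ ≤ 0 := by
      apply eventually_nhdsWithin_of_forall
      intro τ hτ
      have := hbefore τ hτ x k σ hσ
      rw [hgdef]; dsimp only; linarith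
    have := le_of_tendsto htt hev
    rw [hgdef] at this; dsimp only at this; linarith
  -- hence bound on |v| at time τ0
  have habs : ∀ (x : Euc d) k, |v τ0 x k| ≤ bar (τ0, x) k := by
    intro x k
    rw [abs_le]
    constructor
    · have := hattime x k (-1) (Or.inr rfl); linarith
    · have := hattime x k 1 (Or.inl rfl); linarith
  -- equality at the touching point
  have htouch : σ0 * v τ0 x0 k0 = bar (τ0, x0) k0 := by
    have h1 := hattime x0 k0 σ0 hσ0
    have h2 : bar p0 k0 = bar (τ0, x0) k0 := by rw [hτ0def, hx0def]
    linarith [h2 ▸ hW0]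
  -- notation for the final computation
  have hτ0Ioi : τ0 ∈ Ioi (0:ℝ) := hτ0pos
  set E : ℝ := Real.exp (M' * τ0) with hEdef
  have hEpos : 0 < E := Real.exp_pos _
  have hφk0 : 0 < φ x0 k0 := hφpos x0 k0
  -- the time derivative at the touching time is nonnegative
  have hd : HasDerivAt
      (fun τ => σ0 * v τ x0 k0 - Real.exp (M' * τ) * (η + δ + ε * φ x0 k0))
      (σ0 * opA Q b c tb (v τ0) x0 k0 - E * M' * (η + δ + ε * φ x0 k0)) τ0 := by
    apply HasDerivAt.sub
    · exact (hvde τ0 hτ0Ioi x0 k0).const_mul σ0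
    · have h1 : HasDerivAt (fun τ : ℝ => M' * τ) M' τ0 := by
        simpa using (hasDerivAt_id τ0).const_mul M'
      have h2 := (Real.hasDerivAt_exp (M' * τ0)).comp τ0 h1
      have h3 := h2.mul_const (η + δ + ε * φ x0 k0)
      have h4 : Real.exp (M' * τ0) * M' * (η + δ + ε * φ x0 k0)
          = E * M' * (η + δ + ε * φ x0 k0) := by rw [hEdef]
      rw [h4] at h3
      exact h3
  have hzero : σ0 * v τ0 x0 k0 - Real.exp (M' * τ0) * (η + δ + ε * φ x0 k0) = 0 := by
    have hb : bar (τ0, x0) k0 = Real.exp (M' * τ0) * (η + δ + ε * φ x0 k0) := rfl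
    rw [← hb, htouch]
    ring
  have hle0 : ∀ τ ∈ Ico (0:ℝ) τ0,
      σ0 * v τ x0 k0 - Real.exp (M' * τ) * (η + δ + ε * φ x0 k0) ≤ 0 := by
    intro τ hτ
    have h1 := hbefore τ hτ x0 k0 σ0 hσ0
    have hb : bar (τ, x0) k0 = Real.exp (M' * τ) * (η + δ + ε * φ x0 k0) := rfl
    rw [hb] at h1
    linarith
  have htderiv : 0 ≤ σ0 * opA Q b c tb (v τ0) x0 k0 - E * M' * (η + δ + ε * φ x0 k0) :=
    deriv_nonneg_of_le_zero _ _ τ0 hτ0pos hd hzero hle0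
  -- the spatial comparison function
  set ψ : Euc d → ℝ := fun y => σ0 * v τ0 y k0 - (E * ε) * φ y k0 with hψdef
  have hvk0C2 : ContDiff ℝ 2 (fun y => v τ0 y k0) := hvC2 τ0 hτ0Ioi k0
  have hψC2 : ContDiff ℝ 2 ψ := by
    rw [hψdef]
    exact (contDiff_const.mul hvk0C2).sub (contDiff_const.mul (hφC2 k0))
  have hψmax : ∀ y, ψ y ≤ ψ x0 := by
    intro y
    have h1 := hattime y k0 σ0 hσ0
    have hby : bar (τ0, y) k0 = E * (η + δ + ε * φ y k0) := rfl
    rw [hby] at h1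
    have h3 : σ0 * v τ0 x0 k0 = E * (η + δ + ε * φ x0 k0) := by
      rw [htouch]
    have hψy : ψ y = σ0 * v τ0 y k0 - (E * ε) * φ y k0 := rfl
    have hψx : ψ x0 = σ0 * v τ0 x0 k0 - (E * ε) * φ x0 k0 := rfl
    rw [hψy, hψx, h3]
    nlinarith [h1]
  have hfd0 : fderiv ℝ ψ x0 = 0 := by
    apply IsLocalMax.fderiv_eq_zero
    apply IsMaxOn.isLocalMax (s := univ) ?_ univ_mem
    intro y _
    exact hψmax y
  have hpdzero : ∀ j, pd j ψ x0 = 0 := by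
    intro j
    unfold pd
    rw [hfd0]
    simp
  have htrace : ∑ i, ∑ j, Q k0 tb x0 i j * pd2 i j ψ x0 ≤ 0 :=
    trace_pd2_nonpos _ (hQsym k0 x0) (hQpos k0 x0) ψ hψC2 x0 hψmax
  have hpdψ : ∀ j, pd j ψ x0
      = σ0 * pd j (fun y => v τ0 y k0) x0 - (E*ε) * pd j (fun y => φ y k0) x0 := by
    intro j
    rw [hψdef]
    exact pd_comb σ0 (E*ε) (hvk0C2.differentiable (by norm_num))
      ((hφC2 k0).differentiable (by norm_num)) j x0
  have hpd2ψ : ∀ i j, pd2 i j ψ x0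
      = σ0 * pd2 i j (fun y => v τ0 y k0) x0 - (E*ε) * pd2 i j (fun y => φ y k0) x0 := by
    intro i j
    rw [hψdef]
    exact pd2_comb σ0 (E*ε) hvk0C2 (hφC2 k0) i j x0
  -- second order terms
  have hS2 : σ0 * (∑ i, ∑ j, Q k0 tb x0 i j * pd2 i j (fun y => v τ0 y k0) x0)
      ≤ (E*ε) * (∑ i, ∑ j, Q k0 tb x0 i j * pd2 i j (fun y => φ y k0) x0) := by
    have h1 : ∑ i, ∑ j, Q k0 tb x0 i j * pd2 i j ψ x0
        = σ0 * (∑ i, ∑ j, Q k0 tb x0 i j * pd2 i j (fun y => v τ0 y k0) x0)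
          - (E*ε) * (∑ i, ∑ j, Q k0 tb x0 i j * pd2 i j (fun y => φ y k0) x0) := by
      rw [Finset.mul_sum, Finset.mul_sum, ← Finset.sum_sub_distrib]
      apply Finset.sum_congr rfl
      intro i _
      rw [Finset.mul_sum, Finset.mul_sum, ← Finset.sum_sub_distrib]
      apply Finset.sum_congr rfl
      intro j _
      rw [hpd2ψ i j]
      ring
    rw [h1] at htrace
    linarith
  -- first order terms
  have hS1 : σ0 * (∑ j, b k0 tb x0 j * pd j (fun y => v τ0 y k0) x0)
      = (E*ε) * (∑ j, b k0 tb x0 j * pd j (fun y => φ y k0) x0) := by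
    rw [Finset.mul_sum, Finset.mul_sum, ← sub_eq_zero, ← Finset.sum_sub_distrib]
    apply Finset.sum_eq_zero
    intro j _
    have h1 := hpdzero j
    rw [hpdψ j] at h1
    linear_combination (b k0 tb x0 j) * h1
  -- zero order terms
  have hS0c : σ0 * (∑ h, c tb x0 k0 h * v τ0 x0 h)
      ≤ E * (η + δ) * M + (E*ε) * (∑ h, CP c tb x0 k0 h * φ x0 h) := by
    have hterm : ∀ h : Fin m, σ0 * (c tb x0 k0 h * v τ0 x0 h)
        ≤ CP c tb x0 k0 h * (E * (η + δ) + E * ε * φ x0 h) := by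
      intro h
      by_cases hkh : k0 = h
      · subst hkh
        have hCP : CP c tb x0 k0 k0 = c tb x0 k0 k0 := by unfold CP; simp
        have hv : σ0 * v τ0 x0 k0 = E * (η + δ) + E * ε * φ x0 k0 := by
          have hb : bar (τ0, x0) k0 = E * (η + δ + ε * φ x0 k0) := rfl
          rw [htouch, hb]
          ring
        rw [hCP]
        calc σ0 * (c tb x0 k0 k0 * v τ0 x0 k0)
            = c tb x0 k0 k0 * (σ0 * v τ0 x0 k0) := by ring
          _ = c tb x0 k0 k0 * (E * (η + δ) + E * ε * φ x0 k0) := by rw [hv]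
          _ ≤ c tb x0 k0 k0 * (E * (η + δ) + E * ε * φ x0 k0) := le_refl _
      · have hCP : CP c tb x0 k0 h = |c tb x0 k0 h| := by unfold CP; simp [hkh]
        have h1 : σ0 * (c tb x0 k0 h * v τ0 x0 h) ≤ |c tb x0 k0 h| * |v τ0 x0 h| := by
          calc σ0 * (c tb x0 k0 h * v τ0 x0 h) ≤ |c tb x0 k0 h * v τ0 x0 h| := hσabs _
            _ = |c tb x0 k0 h| * |v τ0 x0 h| := abs_mul _ _
        have h2 : |v τ0 x0 h| ≤ E * (η + δ) + E * ε * φ x0 h := by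
          have h3 := habs x0 h
          have hb : bar (τ0, x0) h = E * (η + δ + ε * φ x0 h) := rfl
          rw [hb] at h3
          have hr : E * (η + δ + ε * φ x0 h) = E*(η+δ) + E*ε*φ x0 h := by ring
          linarith only [h3, hr]
        rw [hCP]
        calc σ0 * (c tb x0 k0 h * v τ0 x0 h) ≤ |c tb x0 k0 h| * |v τ0 x0 h| := h1
          _ ≤ |c tb x0 k0 h| * (E * (η + δ) + E * ε * φ x0 h) :=
              mul_le_mul_of_nonneg_left h2 (abs_nonneg _)
    calc σ0 * (∑ h, c tb x0 k0 h * v τ0 x0 h)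
        = ∑ h, σ0 * (c tb x0 k0 h * v τ0 x0 h) := Finset.mul_sum _ _ _
      _ ≤ ∑ h, CP c tb x0 k0 h * (E * (η + δ) + E * ε * φ x0 h) :=
          Finset.sum_le_sum (fun h _ => hterm h)
      _ = E * (η + δ) * (∑ h, CP c tb x0 k0 h)
          + (E*ε) * (∑ h, CP c tb x0 k0 h * φ x0 h) := by
          rw [Finset.mul_sum, Finset.mul_sum, ← Finset.sum_add_distrib]
          apply Finset.sum_congr rfl
          intro h _
          ring
      _ ≤ E * (η + δ) * M + (E*ε) * (∑ h, CP c tb x0 k0 h * φ x0 h) := by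
          have h3 := hM x0 k0
          have h4 : (0:ℝ) ≤ E * (η + δ) := by positivity
          linarith [mul_le_mul_of_nonneg_left h3 h4]
  -- assemble everything
  have hopAv : opA Q b c tb (v τ0) x0 k0
      = (∑ i, ∑ j, Q k0 tb x0 i j * pd2 i j (fun y => v τ0 y k0) x0)
        + (∑ j, b k0 tb x0 j * pd j (fun y => v τ0 y k0) x0)
        + (∑ h, c tb x0 k0 h * v τ0 x0 h) := rfl
  have hopAφ : opA Q b (CP c) tb φ x0 k0
      = (∑ i, ∑ j, Q k0 tb x0 i j * pd2 i j (fun y => φ y k0) x0)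
        + (∑ j, b k0 tb x0 j * pd j (fun y => φ y k0) x0)
        + (∑ h, CP c tb x0 k0 h * φ x0 h) := rfl
  have hlyap0 := hφlyap x0 k0
  rw [hopAφ] at hlyap0
  rw [hopAv] at htderiv
  have hlyapmul := mul_le_mul_of_nonneg_left hlyap0
    (le_of_lt (mul_pos hEpos hε) : (0:ℝ) ≤ E * ε)
  have hfact1 : 0 < (M' - lam) * (E * ε * φ x0 k0) :=
    mul_pos (by linarith) (by positivity)
  have hfact2 : 0 < (M' - M) * (E * (η + δ)) :=
    mul_pos (by linarith) (by positivity)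
  -- make the six sums opaque so the final arithmetic is fast
  set s2v : ℝ := ∑ i, ∑ j, Q k0 tb x0 i j * pd2 i j (fun y => v τ0 y k0) x0 with hs2v
  set s1v : ℝ := ∑ j, b k0 tb x0 j * pd j (fun y => v τ0 y k0) x0 with hs1v
  set s0v : ℝ := ∑ h, c tb x0 k0 h * v τ0 x0 h with hs0v
  set s2p : ℝ := ∑ i, ∑ j, Q k0 tb x0 i j * pd2 i j (fun y => φ y k0) x0 with hs2p
  set s1p : ℝ := ∑ j, b k0 tb x0 j * pd j (fun y => φ y k0) x0 with hs1p
  set s0p : ℝ := ∑ h, CP c tb x0 k0 h * φ x0 h with hs0p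
  set Φ : ℝ := φ x0 k0 with hΦ
  linarith only [htderiv, hS2, hS1, hS0c, hlyapmul, hfact1, hfact2]

end MPAux

/-- Theorem 4.1(ii): if `f_n → f` locally uniformly and `(f_n)` is bounded,
then `(t,τ,x) ↦ (T_t(τ)f_n)(x)` converges to `(t,τ,x) ↦ (T_t(τ)f)(x)` locally uniformly
on `I × (0,∞) × ℝ^d`. -/
theorem statement_10 {d m : ℕ} (hd : 1 ≤ d) (hm : 2 ≤ m)
    (I : Set ℝ) (hI : IsRightHalfline I)
    (Q : Fin m → ℝ → Euc d → Fin d → Fin d → ℝ)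
    (b : Fin m → ℝ → Euc d → Fin d → ℝ)
    (c : ℝ → Euc d → Fin m → Fin m → ℝ)
    (hH : Hyp I Q b c)
    (hH' : ∀ s T : ℝ, s ∈ I → T ∈ I → s < T → HypPrime I Q b c s T)
    (fseq : ℕ → Euc d → Fin m → ℝ)
    (hfc : ∀ n, Continuous (fseq n))
    (hfb : ∃ K, ∀ n (x : Euc d) k, |fseq n x k| ≤ K)
    (f : Euc d → Fin m → ℝ) (hf : IsBddContinuous f)
    (hconv : TendstoLocallyUniformly (fun n (x : Euc d) => fseq n x) f atTop)
    (Useq : ℕ → ℝ → ℝ → Euc d → Fin m → ℝ)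
    (hUseq : ∀ n, ∀ t ∈ I,
      ClassicalSolFrozen Q b c t (fseq n) (Useq n t) ∧ BddOnStrips 0 (Useq n t))
    (U : ℝ → ℝ → Euc d → Fin m → ℝ)
    (hU : ∀ t ∈ I, ClassicalSolFrozen Q b c t f (U t) ∧ BddOnStrips 0 (U t)) :
    TendstoLocallyUniformlyOn
      (fun n (p : ℝ × ℝ × Euc d) => Useq n p.1 p.2.1 p.2.2)
      (fun p : ℝ × ℝ × Euc d => U p.1 p.2.1 p.2.2)
      atTop (I ×ˢ (Ioi (0:ℝ) ×ˢ (univ : Set (Euc d)))) := by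
  classical
  rw [tendstoLocallyUniformlyOn_iff]
  intro ε0 hε0 p hp
  obtain ⟨t, τ, x⟩ := p
  have htI : t ∈ I := hp.1
  have hτpos : (0:ℝ) < τ := hp.2.1
  -- the bounded time interval J and its Lyapunov data
  set J : Set ℝ := I ∩ Icc (t-1) (t+1) with hJdef
  have hJsub : J ⊆ I := inter_subset_left
  have hJbdd : Bornology.IsBounded J :=
    (Metric.isBounded_Icc (t-1) (t+1)).subset inter_subset_right
  obtain ⟨φ, lam, hlam, hφC2, hφpos, hφcoc, hφlyap⟩ := hH.lyap J hJsub hJbdd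
  obtain ⟨M, hM⟩ := hH.rowBdd J hJsub hJbdd
  have hQpos : ∀ t' ∈ J, ∀ k (x' ξ : Euc d),
      0 ≤ ∑ i, ∑ j, Q k t' x' i j * ξ i * ξ j := by
    intro t' ht' k x' ξ
    obtain ⟨μ0, hμ0, hmin⟩ := hH.ellipt J hJsub hJbdd k
    exact MPAux.form_nonneg_of_minEig _ μ0 hμ0 (hmin t' ht' x') ξ
  -- constants
  set T : ℝ := τ + 1 with hTdef
  have hT : 0 < T := by rw [hTdef]; linarith
  set M'' : ℝ := max lam M + 1 with hM''def
  have hM''pos : 0 < M'' := by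
    have := le_max_left lam M
    rw [hM''def]; linarith
  set EE : ℝ := Real.exp (M'' * T) with hEEdef
  have hEEpos : 0 < EE := Real.exp_pos _
  have hEE1 : 1 ≤ EE := Real.one_le_exp (by positivity)
  -- global bound on the data
  obtain ⟨K, hK⟩ := hfb
  obtain ⟨hfcont, F, hF⟩ := hf
  set G : ℝ := K + F with hGdef
  have hG : ∀ n (y : Euc d) k, |fseq n y k - f y k| ≤ G := by
    intro n y k
    calc |fseq n y k - f y k| ≤ |fseq n y k| + |f y k| := abs_sub _ _
      _ ≤ K + F := add_le_add (hK n y k) (hF y k)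
  have k₀ : Fin m := ⟨0, by omega⟩
  have hGnn : 0 ≤ G := le_trans (abs_nonneg _) (hG 0 x k₀)
  -- bound for φ on the closed unit ball around x
  obtain ⟨y0, hy0mem, hy0max⟩ := (isCompact_closedBall x 1).exists_isMaxOn
    ⟨x, mem_closedBall_self (by norm_num)⟩
    (Continuous.continuousOn (by
      exact continuous_finset_sum _ (fun k _ => (hφC2 k).continuous)) :
      ContinuousOn (fun y => ∑ k, φ y k) (closedBall x 1))
  set Φ : ℝ := ∑ k, φ y0 k with hΦdef
  have hΦb : ∀ y ∈ closedBall x 1, ∀ k, φ y k ≤ Φ := by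
    intro y hy k
    have h1 : φ y k ≤ ∑ k', φ y k' :=
      Finset.single_le_sum (fun k' _ => le_of_lt (hφpos y k')) (Finset.mem_univ k)
    exact le_trans h1 (hy0max hy)
  have hΦpos : 0 < Φ := lt_of_lt_of_le (hφpos x k₀) (hΦb x (mem_closedBall_self (by norm_num)) k₀)
  -- small constants
  set η0 : ℝ := ε0 / (4 * EE) with hη0def
  have hη0pos : 0 < η0 := by rw [hη0def]; positivity
  set ε1 : ℝ := η0 / (Φ + 1) with hε1def
  have hε1pos : 0 < ε1 := by rw [hε1def]; positivity
  -- choose a ball outside which the data is dominated by ε1 φ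
  have hCk : ∀ k : Fin m, ∃ C : Set (Euc d), IsCompact C ∧
      ∀ y ∉ C, G / ε1 ≤ φ y k := by
    intro k
    have hev : ∀ᶠ y in cocompact (Euc d), G / ε1 ≤ φ y k :=
      (hφcoc k).eventually (eventually_ge_atTop _)
    obtain ⟨C, hCc, hCsub⟩ := mem_cocompact.mp hev
    exact ⟨C, hCc, fun y hy => hCsub hy⟩
  choose Cs hCsc hCsge using hCk
  obtain ⟨R, hR⟩ := (isCompact_iUnion hCsc).isBounded.subset_closedBall 0
  -- eventually the data is η0-close on the ball
  have huc : TendstoUniformlyOn (fun n (y : Euc d) => fseq n y) f atTop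
      (closedBall (0:Euc d) R) :=
    (tendstoLocallyUniformly_iff_forall_isCompact.mp hconv) _ (isCompact_closedBall _ _)
  have hNev : ∀ᶠ n in atTop, ∀ y ∈ closedBall (0:Euc d) R, dist (f y) (fseq n y) < η0 :=
    (Metric.tendstoUniformlyOn_iff.mp huc) η0 hη0pos
  -- the neighbourhood in which the estimate holds
  refine ⟨(Ioo (t-1) (t+1) ×ˢ (Ioo (τ/2) (τ+1) ×ˢ ball x 1))
      ∩ (I ×ˢ (Ioi (0:ℝ) ×ˢ (univ : Set (Euc d)))), ?_, ?_⟩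
  · apply mem_nhdsWithin.2
    refine ⟨Ioo (t-1) (t+1) ×ˢ (Ioo (τ/2) (τ+1) ×ˢ ball x 1), ?_, ?_, ?_⟩
    · exact isOpen_Ioo.prod (isOpen_Ioo.prod isOpen_ball)
    · refine ⟨⟨by linarith, by linarith⟩, ⟨by linarith, by linarith⟩, mem_ball_self (by norm_num)⟩
    · exact fun q hq => ⟨hq.1, hq.2⟩
  · filter_upwards [hNev] with n hn
    rintro ⟨t', τ', x'⟩ ⟨⟨ht'Ioo, hτ'Ioo, hx'ball⟩, ht'I, hτ'pos, -⟩
    have ht'J : t' ∈ J := ⟨ht'I, ⟨le_of_lt ht'Ioo.1, le_of_lt ht'Ioo.2⟩⟩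
    obtain ⟨hc1, hi1, hC21, hde1⟩ := (hUseq n t' ht'I).1
    obtain ⟨hc2, hi2, hC22, hde2⟩ := (hU t' ht'I).1
    obtain ⟨K1, hK1⟩ := (hUseq n t' ht'I).2 T hT
    obtain ⟨K2, hK2⟩ := (hU t' ht'I).2 T hT
    -- the maximum principle estimate for the difference
    have hest := MPAux.max_principle Q b c t'
      (fun k x'' i j => hH.symm k t' x'' i j)
      (hQpos t' ht'J)
      φ lam hlam hφC2 hφpos hφcoc
      (fun x'' k => hφlyap t' ht'J x'' k)
      M (fun x'' k => hM t' ht'J x'' k)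
      (fun r y k => Useq n t' r y k - U t' r y k)
      (hc1.sub hc2)
      (fun τ'' hτ'' k => (hC21 τ'' hτ'' k).sub (hC22 τ'' hτ'' k))
      (fun τ'' hτ'' x'' k => by
        have h1 := hde1 τ'' hτ'' x'' k
        have h2 := hde2 τ'' hτ'' x'' k
        have h3 := h1.sub h2
        have h4 := MPAux.opA_sub (Q := Q) (b := b) (c := c) (t := t')
          (z1 := Useq n t' τ'') (z2 := U t' τ'')
          (fun k => hC21 τ'' hτ'' k) (fun k => hC22 τ'' hτ'' k) x'' k
        rw [← h4] at h3
        exact h3)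
      T hT (K1 + K2)
      (fun τ'' hτ'' x'' k => by
        calc |Useq n t' τ'' x'' k - U t' τ'' x'' k|
            ≤ |Useq n t' τ'' x'' k| + |U t' τ'' x'' k| := abs_sub _ _
          _ ≤ K1 + K2 := add_le_add (hK1 τ'' hτ'' x'' k) (hK2 τ'' hτ'' x'' k))
      η0 η0 ε1 (le_of_lt hη0pos) hη0pos hε1pos
      (fun y k => by
        show |Useq n t' 0 y k - U t' 0 y k| ≤ η0 + ε1 * φ y k
        rw [hi1 y, hi2 y]
        by_cases hy : y ∈ closedBall (0:Euc d) R
        · have h1 := hn y hy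
          have h2 : dist (f y k) (fseq n y k) ≤ dist (f y) (fseq n y) :=
            dist_le_pi_dist (f y) (fseq n y) k
          rw [Real.dist_eq] at h2
          have h3 : |fseq n y k - f y k| ≤ η0 := by
            rw [abs_sub_comm]
            linarith [lt_of_le_of_lt h2 h1]
          have h4 : 0 ≤ ε1 * φ y k := le_of_lt (mul_pos hε1pos (hφpos y k))
          linarith
        · have hyC : y ∉ Cs k := fun hmem => hy (hR (mem_iUnion.2 ⟨k, hmem⟩))
          have h1 := hCsge k y hyC
          have h2 : G ≤ ε1 * φ y k := by
            rw [div_le_iff₀ hε1pos] at h1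
            linarith [h1]
          have h3 := hG n y k
          linarith)
    -- apply the estimate at (τ', x')
    have hτ'Icc : τ' ∈ Icc (0:ℝ) T := by
      constructor
      · exact le_of_lt hτ'pos
      · rw [hTdef]; exact le_of_lt hτ'Ioo.2
    have hbound := hest τ' hτ'Icc x'
    -- conclude
    rw [dist_pi_lt_iff hε0]
    intro k
    rw [Real.dist_eq]
    have h5 : |U t' τ' x' k - Useq n t' τ' x' k|
        = |Useq n t' τ' x' k - U t' τ' x' k| := abs_sub_comm _ _
    rw [h5]
    have h6 := hbound k
    -- the exponential factor
    have hexple : Real.exp ((max lam M + 1) * τ') ≤ EE := by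
      rw [hEEdef]
      apply Real.exp_le_exp.2
      apply mul_le_mul_of_nonneg_left _ (le_of_lt hM''pos)
      exact hτ'Icc.2
    -- φ at x'
    have hφx' : φ x' k ≤ Φ := hΦb x' (ball_subset_closedBall hx'ball) k
    have hbar1 : η0 + η0 + ε1 * φ x' k ≤ 3 * η0 := by
      have h7 : ε1 * φ x' k ≤ ε1 * Φ :=
        mul_le_mul_of_nonneg_left hφx' (le_of_lt hε1pos)
      have h8 : ε1 * Φ ≤ η0 := by
        rw [hε1def, div_mul_eq_mul_div, div_le_iff₀ (by linarith : (0:ℝ) < Φ + 1)]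
        nlinarith [hη0pos]
      linarith
    have hbarnn : 0 ≤ η0 + η0 + ε1 * φ x' k := by
      have := mul_pos hε1pos (hφpos x' k)
      linarith
    have h9 : Real.exp ((max lam M + 1) * τ') * (η0 + η0 + ε1 * φ x' k)
        ≤ EE * (3 * η0) := by
      apply mul_le_mul hexple hbar1 hbarnn (le_of_lt hEEpos)
    have h10 : EE * (3 * η0) < ε0 := by
      rw [hη0def]
      rw [mul_comm EE (3 * (ε0 / (4 * EE)))]
      rw [mul_comm (3:ℝ) (ε0 / (4 * EE))]
      rw [div_mul_eq_mul_div, div_mul_eq_mul_div]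
      rw [div_lt_iff₀ (by positivity : (0:ℝ) < 4 * EE)]
      nlinarith [hEEpos, hε0]
    have hMM : (max lam M + 1) = M'' := by rw [hM''def]
    calc |Useq n t' τ' x' k - U t' τ' x' k|
        ≤ Real.exp ((max lam M + 1) * τ') * (η0 + η0 + ε1 * φ x' k) := h6
      _ ≤ EE * (3 * η0) := h9
      _ < ε0 := h10
end
end

section
/- Let m ≥ 1 and let C = (c_{kh}) be a real m×m matrix. Define C^P = (c^P_{kh}) by c^P_{kk} = c_{kk} and c^P_{kh} = |c_{kh}| for h ≠ k. Assume that ⟨C^P y, y⟩ ≤ 0 for every y ∈ ℝ^m and that 0 is an eigenvalue of both C and C^P. Then every eigenvalue λ ∈ ℂ of C (viewed as a complex matrix) satisfies Re λ ≤ 0, and 0 is the unique eigenvalue of C on the imaginary axis; that is, if λ is an eigenvalue of C with Re λ = 0, then λ = 0. -/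
open scoped BigOperators

/-- Lemma 5.6: if `⟨C^P y, y⟩ ≤ 0` on `ℝ^m` and `0` is an eigenvalue of
both `C` and `C^P`, then the spectrum of `C` lies in the closed left half-plane and `0`
is its unique eigenvalue on the imaginary axis. -/
theorem statement_15 (m : ℕ) (hm : 1 ≤ m)
    (C CP : Matrix (Fin m) (Fin m) ℝ)
    (hCP : ∀ k h, CP k h = if k = h then C k h else |C k h|)
    (hneg : ∀ y : Fin m → ℝ, (∑ k, ∑ h, CP k h * y k * y h) ≤ 0)
    (h0C : ∃ v : Fin m → ℝ, v ≠ 0 ∧ C.mulVec v = 0)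
    (h0CP : ∃ v : Fin m → ℝ, v ≠ 0 ∧ CP.mulVec v = 0) :
    ∀ lam : ℂ,
      (∃ v : Fin m → ℂ, v ≠ 0 ∧ (C.map (fun x : ℝ => (x : ℂ))).mulVec v = lam • v) →
      lam.re ≤ 0 ∧ (lam.re = 0 → lam = 0) := by
  rintro lam ⟨v, hv, hev⟩
  classical
  set z : Fin m → Fin m → ℂ := fun k h => (starRingEnd ℂ) (v k) * v h with hzdef
  set y : Fin m → ℝ := fun k => ‖v k‖ with hydef
  -- row identity
  have hrow : ∀ k, ∑ h, (C k h : ℂ) * z k h = lam * (Complex.normSq (v k) : ℝ) := by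
    intro k
    have h1 : ∑ h, (C k h : ℂ) * v h = lam * v k := by
      have := congrFun hev k
      simpa [Matrix.mulVec, dotProduct, Matrix.map_apply, Pi.smul_apply,
        smul_eq_mul] using this
    calc ∑ h, (C k h : ℂ) * z k h
        = (starRingEnd ℂ) (v k) * ∑ h, (C k h : ℂ) * v h := by
          rw [Finset.mul_sum]; exact Finset.sum_congr rfl fun h _ => by simp [hzdef]; ring
      _ = (starRingEnd ℂ) (v k) * (lam * v k) := by rw [h1]
      _ = lam * ((starRingEnd ℂ) (v k) * v k) := by ring
      _ = lam * (Complex.normSq (v k) : ℝ) := by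
          rw [← Complex.normSq_eq_conj_mul_self]
  have hzabs : ∀ k h, ‖z k h‖ = y k * y h := by
    intro k h; simp [hzdef, hydef, map_mul]
  have hzdiag : ∀ k, z k k = ((Complex.normSq (v k) : ℝ) : ℂ) := by
    intro k; simp [hzdef, ← Complex.normSq_eq_conj_mul_self]
  -- real and imaginary parts of the row identity
  have hrowre : ∀ k, ∑ h, C k h * (z k h).re = lam.re * Complex.normSq (v k) := by
    intro k
    have := congrArg Complex.re (hrow k)
    simpa [Complex.re_sum, Complex.re_ofReal_mul, Complex.mul_re] using this
  have hrowim : ∀ k, ∑ h, C k h * (z k h).im = lam.im * Complex.normSq (v k) := by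
    intro k
    have := congrArg Complex.im (hrow k)
    simpa [Complex.im_sum, Complex.im_ofReal_mul, Complex.mul_im] using this
  -- termwise inequality
  have hterm : ∀ k h, C k h * (z k h).re ≤ CP k h * y k * y h := by
    intro k h
    by_cases hkh : k = h
    · subst hkh
      rw [hCP k k, if_pos rfl, hzdiag k]
      have : Complex.normSq (v k) = y k * y k := by
        rw [Complex.normSq_eq_norm_sq]; simp [hydef, sq]
      rw [Complex.ofReal_re, this]; ring_nf; exact le_refl _
    · rw [hCP k h, if_neg hkh]
      calc C k h * (z k h).re ≤ |C k h * (z k h).re| := le_abs_self _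
        _ = |C k h| * |(z k h).re| := abs_mul _ _
        _ ≤ |C k h| * ‖z k h‖ :=
            mul_le_mul_of_nonneg_left (Complex.abs_re_le_norm _) (abs_nonneg _)
        _ = |C k h| * y k * y h := by rw [hzabs]; ring
  have hN : 0 < ∑ k, Complex.normSq (v k) := by
    obtain ⟨k, hk⟩ := Function.ne_iff.mp hv
    exact Finset.sum_pos' (fun i _ => Complex.normSq_nonneg _)
      ⟨k, Finset.mem_univ k, Complex.normSq_pos.mpr hk⟩
  have hCPle : (∑ k, ∑ h, CP k h * y k * y h) ≤ 0 := hneg y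
  -- total real part
  have hStot : (∑ k, ∑ h, C k h * (z k h).re) = lam.re * ∑ k, Complex.normSq (v k) := by
    rw [Finset.mul_sum]
    exact Finset.sum_congr rfl fun k _ => hrowre k
  have hSle : lam.re * (∑ k, Complex.normSq (v k)) ≤ 0 := by
    rw [← hStot]
    calc (∑ k, ∑ h, C k h * (z k h).re) ≤ ∑ k, ∑ h, CP k h * y k * y h :=
          Finset.sum_le_sum fun k _ => Finset.sum_le_sum fun h _ => hterm k h
      _ ≤ 0 := hCPle
  constructor
  · exact nonpos_of_mul_nonpos_right (by linarith [hSle]) hN |>.trans_eq rfl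
  · intro hre
    -- equality case: each termwise inequality is an equality
    have hsumD : (∑ k, ∑ h, (CP k h * y k * y h - C k h * (z k h).re)) = 0 := by
      have h1 : (∑ k, ∑ h, (CP k h * y k * y h - C k h * (z k h).re))
          = (∑ k, ∑ h, CP k h * y k * y h) - (∑ k, ∑ h, C k h * (z k h).re) := by
        simp [Finset.sum_sub_distrib]
      have h2 : (∑ k, ∑ h, C k h * (z k h).re) = 0 := by rw [hStot, hre, zero_mul]
      have h3 : (0:ℝ) ≤ ∑ k, ∑ h, (CP k h * y k * y h - C k h * (z k h).re) :=
        Finset.sum_nonneg fun k _ => Finset.sum_nonneg fun h _ => by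
          linarith [hterm k h]
      have h4 : (∑ k, ∑ h, (CP k h * y k * y h - C k h * (z k h).re)) ≤ 0 := by
        rw [h1, h2]; linarith [hCPle]
      linarith
    have hDzero : ∀ k h, CP k h * y k * y h - C k h * (z k h).re = 0 := by
      intro k h
      have hinner : ∀ k ∈ Finset.univ,
          (∑ h, (CP k h * y k * y h - C k h * (z k h).re)) = 0 :=
        (Finset.sum_eq_zero_iff_of_nonneg
          (fun k _ => Finset.sum_nonneg fun h _ => by linarith [hterm k h])).mp hsumD
      have := (Finset.sum_eq_zero_iff_of_nonneg
        (fun h _ => by linarith [hterm k h])).mp (hinner k (Finset.mem_univ k))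
      exact this h (Finset.mem_univ h)
    -- each off-diagonal term has zero imaginary part after multiplying by C k h
    have him0 : ∀ k h, C k h * (z k h).im = 0 := by
      intro k h
      by_cases hkh : k = h
      · subst hkh; rw [hzdiag k]; simp
      · by_cases hC : C k h = 0
        · rw [hC, zero_mul]
        · have hD := hDzero k h
          rw [hCP k h, if_neg hkh] at hD
          -- C k h * (z k h).re = |C k h| * y k * y h = |C k h| * |z k h|
          have habs : |C k h| * ‖z k h‖ = C k h * (z k h).re := by
            rw [hzabs]; linarith [hD]
          have hle1 : C k h * (z k h).re ≤ |C k h| * |(z k h).re| := by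
            calc C k h * (z k h).re ≤ |C k h * (z k h).re| := le_abs_self _
              _ = |C k h| * |(z k h).re| := abs_mul _ _
          have hle2 : |(z k h).re| ≤ ‖z k h‖ := Complex.abs_re_le_norm _
          have hCpos : 0 < |C k h| := abs_pos.mpr hC
          have heq : |(z k h).re| = ‖z k h‖ := by
            nlinarith
          have : (z k h).re ^ 2 = ‖z k h‖ ^ 2 := by
            rw [← heq, sq_abs]
          rw [Complex.sq_norm, Complex.normSq_apply] at this
          have : (z k h).im = 0 := by nlinarith
          rw [this, mul_zero]
    have himlam : ∀ k, lam.im * Complex.normSq (v k) = 0 := by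
      intro k
      rw [← hrowim k]
      exact Finset.sum_eq_zero fun h _ => him0 k h
    obtain ⟨k, hk⟩ := Function.ne_iff.mp hv
    have hnsq : Complex.normSq (v k) ≠ 0 := fun hh => hk (Complex.normSq_eq_zero.mp hh)
    have him : lam.im = 0 := by
      have := himlam k
      exact (mul_eq_zero.mp this).resolve_right hnsq
    exact Complex.ext hre him
end
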